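/- arXiv:2412.15043 — 5 statements merged into one kernel-verified Lean document; each statement's English description precedes it below -/
import Mathlib

section
/- If f : [0,1] → ℝ is Hölder continuous with exponent 1/2 and constant L (i.e. |f(x)-f(y)| ≤ L|x-y|^{1/2}), and f_m is the truncation of the Haar expansion of f at level m (i.e. f_m = c_0(f)h_0 + Σ_{k=0}^{m-1} Σ_{j=1}^{2^k} c_{k,j}(f) h_{k,j}), then sup_{t ∈ [0,1]} |f(t) - f_m(t)| ≤ L 2^{-m/2}. -/
open MeasureTheory

/-- Dyadic interval `Δ_{k,j}`: `[0, 2^{-k}]` for `j = 1`, `((j-1)2^{-k}, j·2^{-k}]` for `j ≥ 2`. -/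
noncomputable def haarDyad (k j : ℕ) : Set ℝ :=
  if j = 1 then Set.Icc 0 (2 ^ (-(k : ℝ)))
  else Set.Ioc (((j : ℝ) - 1) * 2 ^ (-(k : ℝ))) ((j : ℝ) * 2 ^ (-(k : ℝ)))

/-- Haar function `h_{k,j} = 2^{k/2} (1(Δ_{k+1,2j-1}) - 1(Δ_{k+1,2j}))`. -/
noncomputable def haarFn (k j : ℕ) (u : ℝ) : ℝ :=
  2 ^ ((k : ℝ) / 2) *
    ((haarDyad (k + 1) (2 * j - 1)).indicator (fun _ => (1 : ℝ)) u -
      (haarDyad (k + 1) (2 * j)).indicator (fun _ => (1 : ℝ)) u)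

/-- Fourier–Haar coefficient `c_{k,j}(f) = ∫₀¹ f(u) h_{k,j}(u) du`. -/
noncomputable def haarCoeff (f : ℝ → ℝ) (k j : ℕ) : ℝ :=
  ∫ u in (0 : ℝ)..1, f u * haarFn k j u

/-- Truncated Haar expansion `f_m = c₀(f)h₀ + Σ_{k<m} Σ_{j=1}^{2^k} c_{k,j}(f) h_{k,j}`,
where `h₀` is the indicator of `[0,1]` and `c₀(f) = ∫₀¹ f`. -/
noncomputable def partialHaar (f : ℝ → ℝ) (m : ℕ) (t : ℝ) : ℝ :=
  (∫ u in (0 : ℝ)..1, f u) * (Set.Icc (0 : ℝ) 1).indicator (fun _ => (1 : ℝ)) t +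
    ∑ k ∈ Finset.range m, ∑ j ∈ Finset.Icc 1 (2 ^ k), haarCoeff f k j * haarFn k j t

lemma Hpos (k : ℕ) : (0:ℝ) < 2 ^ (-(k : ℝ)) := Real.rpow_pos_of_pos two_pos _

lemma Hsucc (k : ℕ) : (2:ℝ) ^ (-(k : ℝ)) = 2 * 2 ^ (-((k:ℝ)+1)) := by
  rw [show -(k:ℝ) = 1 + -((k:ℝ)+1) by ring, Real.rpow_add two_pos, Real.rpow_one]

lemma Hmul (k : ℕ) : (2:ℝ) ^ (k:ℕ) * 2 ^ (-(k : ℝ)) = 1 := by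
  rw [← Real.rpow_natCast 2 k, ← Real.rpow_add two_pos]; simp

lemma haarDyad_mem_le {k i : ℕ} (hi : 1 ≤ i) {t : ℝ} (ht : t ∈ haarDyad k i) :
    ((i:ℝ)-1) * 2 ^ (-(k:ℝ)) ≤ t ∧ t ≤ (i:ℝ) * 2 ^ (-(k:ℝ)) ∧ 0 ≤ t := by
  unfold haarDyad at ht
  split_ifs at ht with h
  · subst h; simp only [Set.mem_Icc] at ht
    refine ⟨?_, by simpa using ht.2, ht.1⟩
    simpa using ht.1
  · refine ⟨ht.1.le, ht.2, ?_⟩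
    have h2 : 2 ≤ i := by omega
    have h2' : (2:ℝ) ≤ i := by exact_mod_cast h2
    nlinarith [ht.1, Hpos k]

lemma haarDyad_subset {k i : ℕ} (hi : 1 ≤ i) (hi2 : i ≤ 2^k) :
    haarDyad k i ⊆ Set.Icc 0 1 := by
  intro t ht
  obtain ⟨h1, h2, h3⟩ := haarDyad_mem_le hi ht
  refine ⟨h3, h2.trans ?_⟩
  calc (i:ℝ) * 2 ^ (-(k:ℝ)) ≤ (2^k : ℕ) * 2 ^ (-(k:ℝ)) := by
        apply mul_le_mul_of_nonneg_right _ (Hpos k).le; exact_mod_cast hi2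
    _ = 1 := by push_cast; exact Hmul k

lemma haarDyad_disj {k a b : ℕ} (ha : 1 ≤ a) (hab : a < b) {t : ℝ}
    (hta : t ∈ haarDyad k a) : t ∉ haarDyad k b := by
  intro htb
  have h1 := (haarDyad_mem_le ha hta).2.1
  unfold haarDyad at htb
  rw [if_neg (by omega)] at htb
  have h2 : ((b:ℝ)-1) * 2 ^ (-(k:ℝ)) < t := htb.1
  have h3 : (a:ℝ) ≤ (b:ℝ) - 1 := by
    have : (a:ℝ) + 1 ≤ b := by exact_mod_cast hab
    linarith
  nlinarith [Hpos k]

lemma haarDyad_ne {k a b : ℕ} (ha : 1 ≤ a) (hb : 1 ≤ b) (hab : a ≠ b) {t : ℝ}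
    (hta : t ∈ haarDyad k a) : t ∉ haarDyad k b := by
  rcases lt_or_gt_of_ne hab with h | h
  · exact haarDyad_disj ha h hta
  · intro htb; exact haarDyad_disj hb h htb hta

lemma haarDyad_union {k j : ℕ} (hj : 1 ≤ j) :
    haarDyad (k+1) (2*j-1) ∪ haarDyad (k+1) (2*j) = haarDyad k j := by
  have hHpos : (0:ℝ) < 2 ^ (-((k:ℝ)+1)) := Real.rpow_pos_of_pos two_pos _
  rcases eq_or_lt_of_le hj with h1 | h2
  · subst h1
    unfold haarDyad
    rw [if_pos (by norm_num), if_pos rfl, if_neg (by norm_num)]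
    push_cast
    rw [Hsucc k]
    generalize (2:ℝ) ^ (-((k:ℝ)+1)) = H at *
    rw [show ((2:ℝ)-1)*H = H by ring, Set.Icc_union_Ioc_eq_Icc hHpos.le (by linarith)]
  · have h2j : 2 ≤ j := h2
    have hcst : ((2*j-1 : ℕ) : ℝ) = 2*(j:ℝ) - 1 := by
      have : (1:ℕ) ≤ 2*j := by omega
      push_cast [Nat.cast_sub this]; ring
    unfold haarDyad
    rw [if_neg (by omega), if_neg (by omega), if_neg (by omega), hcst]
    push_cast
    rw [Hsucc k]
    generalize (2:ℝ) ^ (-((k:ℝ)+1)) = H at *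
    rw [Set.Ioc_union_Ioc_eq_Ioc (by nlinarith) (by nlinarith)]
    congr 1 <;> ring

lemma indic_Ioc (f : ℝ → ℝ) {a b : ℝ} (h0 : 0 ≤ a) (hab : a ≤ b) (hb : b ≤ 1) :
    ∫ u in (0:ℝ)..1, (Set.Ioc a b).indicator f u = ∫ u in a..b, f u := by
  rw [intervalIntegral.integral_of_le zero_le_one, intervalIntegral.integral_of_le hab,
    setIntegral_indicator measurableSet_Ioc,
    Set.inter_eq_right.mpr (Set.Ioc_subset_Ioc h0 hb)]

lemma indic_Icc0 (f : ℝ → ℝ) {b : ℝ} (h0 : 0 ≤ b) (hb : b ≤ 1) :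
    ∫ u in (0:ℝ)..1, (Set.Icc 0 b).indicator f u = ∫ u in (0:ℝ)..b, f u := by
  rw [intervalIntegral.integral_of_le zero_le_one, intervalIntegral.integral_of_le h0,
    setIntegral_indicator measurableSet_Icc]
  congr 1
  rw [show Set.Ioc (0:ℝ) 1 ∩ Set.Icc 0 b = Set.Ioc 0 b by
    ext x
    simp only [Set.mem_inter_iff, Set.mem_Ioc, Set.mem_Icc]
    constructor
    · rintro ⟨⟨h1,h2⟩,⟨h3,h4⟩⟩; exact ⟨h1,h4⟩
    · rintro ⟨h1,h2⟩; exact ⟨⟨h1, h2.trans hb⟩, ⟨h1.le, h2⟩⟩]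

lemma indic_dyad (f : ℝ → ℝ) {k i : ℕ} (hi : 1 ≤ i) (hi2 : i ≤ 2^k) :
    ∫ u in (0:ℝ)..1, (haarDyad k i).indicator f u
      = ∫ u in (((i:ℝ)-1) * 2 ^ (-(k:ℝ)))..((i:ℝ) * 2 ^ (-(k:ℝ))), f u := by
  have hHpos : (0:ℝ) < 2 ^ (-(k:ℝ)) := Hpos k
  have hub : (i:ℝ) * 2 ^ (-(k:ℝ)) ≤ 1 := by
    calc (i:ℝ) * 2 ^ (-(k:ℝ)) ≤ (2^k : ℕ) * 2 ^ (-(k:ℝ)) := by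
          apply mul_le_mul_of_nonneg_right _ hHpos.le; exact_mod_cast hi2
      _ = 1 := by push_cast; exact Hmul k
  rcases eq_or_lt_of_le hi with h1 | h2
  · subst h1
    unfold haarDyad
    rw [if_pos rfl]
    push_cast
    rw [show ((1:ℝ)-1) * 2 ^ (-(k:ℝ)) = 0 by ring,
      show (1:ℝ) * 2 ^ (-(k:ℝ)) = 2 ^ (-(k:ℝ)) by ring]
    exact indic_Icc0 f hHpos.le (by simpa using hub)
  · have hi' : (2:ℝ) ≤ i := by exact_mod_cast h2
    unfold haarDyad
    rw [if_neg (by omega)]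
    exact indic_Ioc f (by nlinarith) (by nlinarith) hub

lemma haarDyad_meas (k i : ℕ) : MeasurableSet (haarDyad k i) := by
  unfold haarDyad; split_ifs; exacts [measurableSet_Icc, measurableSet_Ioc]

lemma indic_intble {f : ℝ → ℝ} (hfi : IntervalIntegrable f volume 0 1) (k i : ℕ) :
    IntervalIntegrable ((haarDyad k i).indicator f) volume 0 1 := by
  rw [intervalIntegrable_iff_integrableOn_Ioc_of_le zero_le_one] at *
  exact hfi.indicator (haarDyad_meas k i)

lemma haarCoeff_eq {f : ℝ → ℝ} (hfi : IntervalIntegrable f volume 0 1) {k j : ℕ}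
    (hj : 1 ≤ j) (hj2 : j ≤ 2^k) :
    haarCoeff f k j = 2 ^ ((k:ℝ)/2) *
      ((∫ u in ((((2*j-1:ℕ):ℝ)-1) * 2 ^ (-((k+1:ℕ):ℝ)))..(((2*j-1:ℕ):ℝ) * 2 ^ (-((k+1:ℕ):ℝ))), f u)
      - ∫ u in ((((2*j:ℕ):ℝ)-1) * 2 ^ (-((k+1:ℕ):ℝ)))..(((2*j:ℕ):ℝ) * 2 ^ (-((k+1:ℕ):ℝ))), f u) := by
  have hpt : ∀ u, f u * haarFn k j u = 2 ^ ((k:ℝ)/2) *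
      ((haarDyad (k+1) (2*j-1)).indicator f u - (haarDyad (k+1) (2*j)).indicator f u) := by
    intro u
    classical
    unfold haarFn
    rw [Set.indicator_apply, Set.indicator_apply, Set.indicator_apply, Set.indicator_apply]
    split_ifs <;> ring
  unfold haarCoeff
  rw [intervalIntegral.integral_congr (g := fun u => 2 ^ ((k:ℝ)/2) *
      ((haarDyad (k+1) (2*j-1)).indicator f u - (haarDyad (k+1) (2*j)).indicator f u))
      (fun u _ => hpt u),
    intervalIntegral.integral_const_mul,
    intervalIntegral.integral_sub (indic_intble hfi _ _) (indic_intble hfi _ _),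
    indic_dyad f (k := k+1) (i := 2*j-1) (by omega) (by omega),
    indic_dyad f (k := k+1) (i := 2*j) (by omega) (by omega)]

lemma key {f : ℝ → ℝ} (hc : ContinuousOn f (Set.Icc 0 1)) :
    ∀ m : ℕ, ∀ i : ℕ, 1 ≤ i → i ≤ 2^m → ∀ t ∈ haarDyad m i,
      partialHaar f m t
        = 2^(m:ℕ) * ∫ u in (((i:ℝ)-1) * 2 ^ (-(m:ℝ)))..((i:ℝ) * 2 ^ (-(m:ℝ))), f u := by
  have hint : ∀ a b : ℝ, 0 ≤ a → a ≤ b → b ≤ 1 → IntervalIntegrable f volume a b := by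
    intro a b ha hab hb
    apply (hc.mono _).intervalIntegrable
    rw [Set.uIcc_of_le hab]
    exact Set.Icc_subset_Icc ha hb
  intro m
  induction m with
  | zero =>
    intro i hi hi2 t ht
    interval_cases i
    have h1 : haarDyad 0 1 = Set.Icc 0 1 := by
      unfold haarDyad; rw [if_pos rfl]; norm_num
    rw [h1] at ht
    unfold partialHaar
    rw [Set.indicator_of_mem ht]
    norm_num
  | succ m IH =>
    intro i hi hi2 t ht
    set j := (i+1)/2 with hjdef
    have hj : 1 ≤ j := by omega
    have hj2 : j ≤ 2^m := by
      have : i ≤ 2^(m+1) := hi2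
      have h2 : 2^(m+1) = 2*2^m := by ring
      omega
    have hij : i = 2*j-1 ∨ i = 2*j := by omega
    have htj : t ∈ haarDyad m j := by
      rw [← haarDyad_union hj]
      rcases hij with h | h
      · left; rwa [← h]
      · right; rwa [← h]
    have hfi : IntervalIntegrable f volume 0 1 := hint 0 1 le_rfl zero_le_one le_rfl
    have h2j1 : ((2*j-1:ℕ):ℝ) = 2*(j:ℝ) - 1 := by
      have h : (1:ℕ) ≤ 2*j := by omega
      push_cast [Nat.cast_sub h]; ring
    -- abbreviations
    have hHpos : (0:ℝ) < 2 ^ (-((m+1:ℕ):ℝ)) := Hpos (m+1)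
    set H : ℝ := 2 ^ (-((m+1:ℕ):ℝ)) with hHdef
    have hH : (2:ℝ) ^ (-(m:ℝ)) = 2 * H := by rw [hHdef]; push_cast; exact Hsucc m
    have hub : 2*(j:ℝ) * H ≤ 1 := by
      have h1 : (2*j : ℕ) ≤ 2^(m+1) := by omega
      have h2 : (2*(j:ℝ)) ≤ (2^(m+1) : ℕ) := by exact_mod_cast h1
      calc 2*(j:ℝ) * H ≤ (2^(m+1):ℕ) * H := mul_le_mul_of_nonneg_right h2 hHpos.le
        _ = 1 := by
            rw [hHdef]; have h3 := Hmul (m+1); push_cast at h3 ⊢; linarith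
    have hlb : (0:ℝ) ≤ (2*(j:ℝ)-2) * H := by
      have : (1:ℝ) ≤ (j:ℝ) := by exact_mod_cast hj
      nlinarith
    -- split partialHaar
    have hsplit : partialHaar f (m+1) t = partialHaar f m t
        + ∑ j' ∈ Finset.Icc 1 (2^m), haarCoeff f m j' * haarFn m j' t := by
      unfold partialHaar
      rw [Finset.sum_range_succ]
      ring
    -- only j survives
    have hone : ∑ j' ∈ Finset.Icc 1 (2^m), haarCoeff f m j' * haarFn m j' t
        = haarCoeff f m j * haarFn m j t := by
      apply Finset.sum_eq_single_of_mem j (Finset.mem_Icc.mpr ⟨hj, hj2⟩)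
      intro j' hj' hne
      have hj'1 : 1 ≤ j' := (Finset.mem_Icc.mp hj').1
      have hz : haarFn m j' t = 0 := by
        unfold haarFn
        rw [Set.indicator_of_notMem, Set.indicator_of_notMem]
        · ring
        · exact haarDyad_ne hi (by omega) (by omega) ht
        · exact haarDyad_ne hi (by omega) (by omega) ht
      rw [hz, mul_zero]
    -- IH value
    have hIH : partialHaar f m t
        = 2^(m:ℕ) * ∫ u in ((2*(j:ℝ)-2) * H)..(2*(j:ℝ) * H), f u := by
      rw [IH j hj hj2 t htj, hH,
        show ((j:ℝ)-1) * (2*H) = (2*(j:ℝ)-2)*H by ring,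
        show (j:ℝ) * (2*H) = 2*(j:ℝ)*H by ring]
    -- coefficient value
    have hcoef : haarCoeff f m j = 2 ^ ((m:ℝ)/2) *
        ((∫ u in ((2*(j:ℝ)-2) * H)..((2*(j:ℝ)-1) * H), f u)
          - ∫ u in ((2*(j:ℝ)-1) * H)..(2*(j:ℝ) * H), f u) := by
      rw [haarCoeff_eq hfi hj hj2, ← hHdef, h2j1]
      push_cast
      rw [show (2*(j:ℝ)-1) - 1 = 2*(j:ℝ)-2 by ring]
    -- adjacent split
    have hmid1 : (2*(j:ℝ)-2)*H ≤ (2*(j:ℝ)-1)*H := by nlinarith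
    have hmid2 : (2*(j:ℝ)-1)*H ≤ 2*(j:ℝ)*H := by nlinarith
    have hadj : (∫ u in ((2*(j:ℝ)-2) * H)..(2*(j:ℝ) * H), f u)
        = (∫ u in ((2*(j:ℝ)-2) * H)..((2*(j:ℝ)-1) * H), f u)
          + ∫ u in ((2*(j:ℝ)-1) * H)..(2*(j:ℝ) * H), f u := by
      rw [intervalIntegral.integral_add_adjacent_intervals
        (hint _ _ hlb hmid1 (by nlinarith))
        (hint _ _ (hlb.trans hmid1) hmid2 hub)]
    have hpow : (2:ℝ) ^ ((m:ℝ)/2) * 2 ^ ((m:ℝ)/2) = 2^(m:ℕ) := by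
      rw [← Real.rpow_add two_pos, show (m:ℝ)/2 + (m:ℝ)/2 = (m:ℝ) by ring,
        Real.rpow_natCast]
    -- haarFn value and conclusion, by cases
    rcases hij with hcase | hcase
    · -- i = 2j-1, t in left child
      have htl : t ∈ haarDyad (m+1) (2*j-1) := by rwa [← hcase]
      have htr : t ∉ haarDyad (m+1) (2*j) := haarDyad_ne (by omega) (by omega) (by omega) htl
      have hfn : haarFn m j t = 2 ^ ((m:ℝ)/2) := by
        unfold haarFn
        rw [Set.indicator_of_mem htl, Set.indicator_of_notMem htr]
        ring
      have hiR : (i:ℝ) = 2*(j:ℝ) - 1 := by rw [hcase]; exact h2j1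
      rw [hsplit, hone, hIH, hcoef, hfn, hadj, hiR,
        show ((2*(j:ℝ)-1) - 1)*H = (2*(j:ℝ)-2)*H by ring]
      generalize (∫ u in ((2*(j:ℝ)-2) * H)..((2*(j:ℝ)-1) * H), f u) = A
      generalize (∫ u in ((2*(j:ℝ)-1) * H)..(2*(j:ℝ) * H), f u) = B
      have h5 : (2:ℝ) ^ ((m:ℝ)/2) * (A-B) * 2 ^ ((m:ℝ)/2) = 2^(m:ℕ) * (A-B) := by
        rw [← hpow]; ring
      rw [pow_succ]
      linarith
    · -- i = 2j, t in right child
      have htr : t ∈ haarDyad (m+1) (2*j) := by rwa [← hcase]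
      have htl : t ∉ haarDyad (m+1) (2*j-1) := haarDyad_ne (by omega) (by omega) (by omega) htr
      have hfn : haarFn m j t = -(2 ^ ((m:ℝ)/2)) := by
        unfold haarFn
        rw [Set.indicator_of_mem htr, Set.indicator_of_notMem htl]
        ring
      have hiR : (i:ℝ) = 2*(j:ℝ) := by rw [hcase]; push_cast; ring
      rw [hsplit, hone, hIH, hcoef, hfn, hadj, hiR]
      generalize (∫ u in ((2*(j:ℝ)-2) * H)..((2*(j:ℝ)-1) * H), f u) = A
      generalize (∫ u in ((2*(j:ℝ)-1) * H)..(2*(j:ℝ) * H), f u) = B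
      have h5 : (2:ℝ) ^ ((m:ℝ)/2) * (A-B) * (-(2 ^ ((m:ℝ)/2))) = -(2^(m:ℕ) * (A-B)) := by
        rw [← hpow]; ring
      rw [pow_succ]
      linarith

lemma exists_idx (m : ℕ) {t : ℝ} (ht : t ∈ Set.Icc (0:ℝ) 1) :
    ∃ i : ℕ, 1 ≤ i ∧ i ≤ 2^m ∧ t ∈ haarDyad m i := by
  have hHpos := Hpos m
  set H : ℝ := 2 ^ (-(m:ℝ)) with hHdef
  have hPH : (2:ℝ)^(m:ℕ) * H = 1 := Hmul m
  have hPpos : (0:ℝ) < 2^(m:ℕ) := by positivity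
  by_cases hcase : t ≤ H
  · refine ⟨1, le_rfl, Nat.one_le_two_pow, ?_⟩
    unfold haarDyad
    rw [if_pos rfl]
    exact ⟨ht.1, hcase⟩
  · push_neg at hcase
    set x : ℝ := t * 2^(m:ℕ) with hxdef
    have hx0 : 0 ≤ x := mul_nonneg ht.1 hPpos.le
    set i : ℕ := ⌈x⌉₊ with hidef
    have hile : (x:ℝ) ≤ i := Nat.le_ceil x
    have hilt : (i:ℝ) - 1 < x := by
      have := Nat.ceil_lt_add_one hx0
      linarith
    have hi2 : i ≤ 2^m := by
      rw [hidef, Nat.ceil_le]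
      calc x = t * 2^(m:ℕ) := rfl
        _ ≤ 1 * 2^(m:ℕ) := mul_le_mul_of_nonneg_right ht.2 hPpos.le
        _ = ((2^m : ℕ) : ℝ) := by push_cast; ring
    have htle : t ≤ (i:ℝ) * H := by
      have := mul_le_mul_of_nonneg_right hile hHpos.le
      calc t = t * ((2:ℝ)^(m:ℕ) * H) := by rw [hPH]; ring
        _ = x * H := by rw [hxdef]; ring
        _ ≤ (i:ℝ) * H := this
    have htgt : ((i:ℝ) - 1) * H < t := by
      have := mul_lt_mul_of_pos_right hilt hHpos
      calc ((i:ℝ)-1) * H < x * H := this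
        _ = t * ((2:ℝ)^(m:ℕ) * H) := by rw [hxdef]; ring
        _ = t := by rw [hPH]; ring
    have hi1 : 2 ≤ i := by
      by_contra h
      push_neg at h
      interval_cases i
      · norm_num at htle; linarith
      · rw [Nat.cast_one, one_mul] at htle
        linarith
    refine ⟨i, by omega, hi2, ?_⟩
    unfold haarDyad
    rw [if_neg (by omega)]
    exact ⟨htgt, htle⟩

lemma holder_cont {L : ℝ} (hL : 0 < L) {f : ℝ → ℝ}
    (hf : ∀ x ∈ Set.Icc (0 : ℝ) 1, ∀ y ∈ Set.Icc (0 : ℝ) 1,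
      |f x - f y| ≤ L * |x - y| ^ ((1 : ℝ) / 2)) :
    ContinuousOn f (Set.Icc 0 1) := by
  rw [Metric.continuousOn_iff]
  intro x hx ε hε
  refine ⟨(ε/L) ^ (2:ℝ), Real.rpow_pos_of_pos (div_pos hε hL) 2, fun y hy hd => ?_⟩
  have h1 : dist (f y) (f x) ≤ L * |y - x| ^ ((1:ℝ)/2) := by
    rw [Real.dist_eq]; exact hf y hy x hx
  have h2 : |y - x| ^ ((1:ℝ)/2) < ((ε/L) ^ (2:ℝ)) ^ ((1:ℝ)/2) := by
    apply Real.rpow_lt_rpow (abs_nonneg _) _ (by norm_num)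
    rwa [Real.dist_eq] at hd
  have h3 : ((ε/L) ^ (2:ℝ)) ^ ((1:ℝ)/2) = ε / L := by
    rw [← Real.rpow_mul (div_pos hε hL).le]
    norm_num
  rw [h3] at h2
  calc dist (f y) (f x) ≤ L * |y - x| ^ ((1:ℝ)/2) := h1
    _ < L * (ε / L) := by exact mul_lt_mul_of_pos_left h2 hL
    _ = ε := by field_simp

/-- If `f` is Hölder-`1/2` with constant `L` on `[0,1]`, then the truncated Haar expansion
at level `m` satisfies `sup_{t∈[0,1]} |f(t) - f_m(t)| ≤ L 2^{-m/2}`. -/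
theorem stmt1 (L : ℝ) (hL : 0 < L) (f : ℝ → ℝ)
    (hf : ∀ x ∈ Set.Icc (0 : ℝ) 1, ∀ y ∈ Set.Icc (0 : ℝ) 1,
      |f x - f y| ≤ L * |x - y| ^ ((1 : ℝ) / 2))
    (m : ℕ) :
    ∀ t ∈ Set.Icc (0 : ℝ) 1, |f t - partialHaar f m t| ≤ L * 2 ^ (-(m : ℝ) / 2) := by
  intro t ht
  have hc := holder_cont hL hf
  obtain ⟨i, hi1, hi2, hti⟩ := exists_idx m ht
  have hval := key hc m i hi1 hi2 t hti
  have hHpos : (0:ℝ) < 2 ^ (-(m:ℝ)) := Hpos m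
  set H : ℝ := 2 ^ (-(m:ℝ)) with hHdef
  set a : ℝ := ((i:ℝ)-1) * H with hadef
  set b : ℝ := (i:ℝ) * H with hbdef
  have hPH : (2:ℝ)^(m:ℕ) * H = 1 := Hmul m
  have hba : b - a = H := by rw [hadef, hbdef]; ring
  obtain ⟨hat, htb, ht0⟩ := haarDyad_mem_le hi1 hti
  have hi1' : (1:ℝ) ≤ (i:ℝ) := by exact_mod_cast hi1
  have ha0 : 0 ≤ a := mul_nonneg (by linarith) hHpos.le
  have hb1 : b ≤ 1 := by
    calc b = (i:ℝ) * H := hbdef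
      _ ≤ (2^m : ℕ) * H := by
          apply mul_le_mul_of_nonneg_right _ hHpos.le; exact_mod_cast hi2
      _ = 1 := by push_cast; exact hPH
  have hab : a ≤ b := hat.trans htb
  have hfint : IntervalIntegrable f volume a b := by
    apply (hc.mono _).intervalIntegrable
    rw [Set.uIcc_of_le hab]
    exact Set.Icc_subset_Icc ha0 hb1
  have hdiff : f t - partialHaar f m t = 2^(m:ℕ) * ∫ u in a..b, (f t - f u) := by
    rw [hval,
      intervalIntegral.integral_sub intervalIntegrable_const hfint,
      intervalIntegral.integral_const, smul_eq_mul, hba]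
    linear_combination (-(f t)) * hPH
  have hbound : ∀ x ∈ Set.uIoc a b, ‖f t - f x‖ ≤ L * 2 ^ (-(m:ℝ)/2) := by
    intro x hx
    rw [Set.uIoc_of_le hab] at hx
    have hx1 : x ∈ Set.Icc (0:ℝ) 1 := ⟨ha0.trans hx.1.le, hx.2.trans hb1⟩
    have h1 := hf t ht x hx1
    have h2 : |t - x| ≤ H := by
      rw [abs_le]
      constructor <;> [linarith [hx.2]; linarith [hx.1]]
    have h3 : |t-x| ^ ((1:ℝ)/2) ≤ H ^ ((1:ℝ)/2) :=
      Real.rpow_le_rpow (abs_nonneg _) h2 (by norm_num)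
    have h4 : H ^ ((1:ℝ)/2) = 2 ^ (-(m:ℝ)/2) := by
      rw [hHdef, ← Real.rpow_mul (by norm_num : (0:ℝ) ≤ 2),
        show -(m:ℝ)*((1:ℝ)/2) = -(m:ℝ)/2 by ring]
    rw [Real.norm_eq_abs]
    calc |f t - f x| ≤ L * |t-x|^((1:ℝ)/2) := h1
      _ ≤ L * 2^(-(m:ℝ)/2) := by
          rw [← h4]; exact mul_le_mul_of_nonneg_left h3 hL.le
  have hnorm := intervalIntegral.norm_integral_le_of_norm_le_const hbound
  rw [Real.norm_eq_abs, hba, abs_of_pos hHpos] at hnorm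
  rw [hdiff, abs_mul, abs_of_pos (by positivity : (0:ℝ) < (2:ℝ)^(m:ℕ))]
  calc (2:ℝ)^(m:ℕ) * |∫ u in a..b, (f t - f u)| 
      ≤ (2:ℝ)^(m:ℕ) * (L * 2^(-(m:ℝ)/2) * H) := by
        apply mul_le_mul_of_nonneg_left _ (by positivity)
        exact hnorm
    _ = L * 2^(-(m:ℝ)/2) := by linear_combination (L * 2^(-(m:ℝ)/2)) * hPH
end

section
/- Let ξ be a real-valued random variable with E ξ = 0 and 0 < E ξ² < ∞, satisfying Sakhanenko's condition λ E[|ξ|³ exp(λ|ξ|)] ≤ E ξ² for some λ > 0. Then for all t with |t| ≤ λ/3, E exp(tξ) ≤ exp(t² E ξ²). -/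
open MeasureTheory

section SakhanenkoAux
open Real


lemma L1 (x : ℝ) : exp x ≤ 1 + x * exp x := by
  have h := Real.add_one_le_exp (-x)
  have hp := Real.exp_pos x
  have : Real.exp (-x) * Real.exp x = 1 := by
    rw [← Real.exp_add]; simp
  nlinarith

lemma L2 (x : ℝ) (hx : 0 ≤ x) : exp x ≤ 1 + x + x^2 * exp x / 2 := by
  set f : ℝ → ℝ := fun y => 1 + y + y^2 * exp y / 2 - exp y with hf
  have hd : ∀ y : ℝ, HasDerivAt f (1 + (2*y*exp y + y^2*exp y)/2 - exp y) y := by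
    intro y
    have h1 : HasDerivAt (fun y : ℝ => y^2) (2*y) y := by
      simpa using hasDerivAt_pow 2 y
    have h2 := h1.mul (Real.hasDerivAt_exp y)
    have h3 := ((hasDerivAt_id y).const_add 1).add ((h2.div_const 2).sub (Real.hasDerivAt_exp y))
    have hfun : f = fun z : ℝ => 1 + id z + (z^2 * exp z / 2 - exp z) := by
      funext z; simp [hf]; ring
    rw [hfun]
    exact h3.congr_deriv (by ring)
  have hmono : MonotoneOn f (Set.Ici 0) := by
    apply monotoneOn_of_deriv_nonneg (convex_Ici 0)
    · exact fun y _ => ((hd y).continuousAt.continuousWithinAt)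
    · exact fun y _ => ((hd y).differentiableAt.differentiableWithinAt)
    · intro y hy
      rw [(hd y).deriv]
      have hy0 : 0 ≤ y := by
        simp [interior_Ici] at hy; exact hy.le
      have h1 := L1 y
      have h2 := Real.exp_pos y
      nlinarith [mul_nonneg (mul_nonneg hy0 hy0) h2.le]
  have h0 : f 0 ≤ f x := hmono (by simp) (by simpa using hx) hx
  have hf0 : f 0 = 0 := by simp [hf]
  rw [hf0] at h0
  simp only [hf] at h0
  linarith

lemma L3 (x : ℝ) (hx : 0 ≤ x) : exp x ≤ 1 + x + x^2/2 + x^3 * exp x / 6 := by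
  set f : ℝ → ℝ := fun y => 1 + y + y^2/2 + y^3 * exp y / 6 - exp y with hf
  have hd : ∀ y : ℝ, HasDerivAt f (1 + 2*y/2 + (3*y^2*exp y + y^3*exp y)/6 - exp y) y := by
    intro y
    have h1 : HasDerivAt (fun y : ℝ => y^3) (3*y^2) y := by
      simpa using hasDerivAt_pow 3 y
    have hsq : HasDerivAt (fun y : ℝ => y^2) (2*y) y := by
      simpa using hasDerivAt_pow 2 y
    have h2 := h1.mul (Real.hasDerivAt_exp y)
    have h3 := (((hasDerivAt_id y).const_add 1).add (hsq.div_const 2)).add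
      ((h2.div_const 6).sub (Real.hasDerivAt_exp y))
    have hfun : f = fun z : ℝ => 1 + id z + z^2/2 + (z^3 * exp z / 6 - exp z) := by
      funext z; simp [hf]; ring
    rw [hfun]
    exact h3.congr_deriv (by ring)
  have hmono : MonotoneOn f (Set.Ici 0) := by
    apply monotoneOn_of_deriv_nonneg (convex_Ici 0)
    · exact fun y _ => ((hd y).continuousAt.continuousWithinAt)
    · exact fun y _ => ((hd y).differentiableAt.differentiableWithinAt)
    · intro y hy
      rw [(hd y).deriv]
      have hy0 : 0 ≤ y := by
        simp [interior_Ici] at hy; exact hy.le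
      have h1 := L2 y hy0
      have h2 := Real.exp_pos y
      nlinarith [mul_nonneg (mul_nonneg (mul_nonneg hy0 hy0) hy0) h2.le]
  have h0 : f 0 ≤ f x := hmono (by simp) (by simpa using hx) hx
  have hf0 : f 0 = 0 := by simp [hf]
  rw [hf0] at h0
  simp only [hf] at h0
  linarith

lemma L4 (x : ℝ) (hx : x ≤ 0) : exp x ≤ 1 + x + x^2/2 := by
  set f : ℝ → ℝ := fun y => 1 + y + y^2/2 - exp y with hf
  have hd : ∀ y : ℝ, HasDerivAt f (1 + 2*y/2 - exp y) y := by
    intro y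
    have hsq : HasDerivAt (fun y : ℝ => y^2) (2*y) y := by
      simpa using hasDerivAt_pow 2 y
    have h3 := (((hasDerivAt_id y).const_add 1).add (hsq.div_const 2)).sub (Real.hasDerivAt_exp y)
    have hfun : f = fun z : ℝ => 1 + id z + z^2/2 - exp z := by
      funext z; simp [hf]
    rw [hfun]
    exact h3
  have hanti : AntitoneOn f (Set.Iic 0) := by
    apply antitoneOn_of_deriv_nonpos (convex_Iic 0)
    · exact fun y _ => ((hd y).continuousAt.continuousWithinAt)
    · exact fun y _ => ((hd y).differentiableAt.differentiableWithinAt)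
    · intro y hy
      rw [(hd y).deriv]
      have := Real.add_one_le_exp y
      nlinarith
  have h0 : f 0 ≤ f x := hanti (by simpa using hx) (by simp) hx
  have hf0 : f 0 = 0 := by simp [hf]
  rw [hf0] at h0
  simp only [hf] at h0
  linarith

lemma LA (x : ℝ) : exp x ≤ 1 + x + x^2/2 + |x|^3 * exp |x| / 6 := by
  rcases le_or_gt 0 x with hx | hx
  · rw [abs_of_nonneg hx]; exact L3 x hx
  · rw [abs_of_neg hx]
    have h1 := L4 x hx.le
    have h2 : 0 ≤ (-x)^3 * exp (-x) / 6 :=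
      div_nonneg (mul_nonneg (pow_nonneg (by linarith) 3) (exp_pos _).le) (by norm_num)
    linarith

end SakhanenkoAux


/-- Sakhanenko MGF bound: if `E ξ = 0`, `0 < E ξ² < ∞` and
`λ E[|ξ|³ exp(λ|ξ|)] ≤ E ξ²`, then `E exp(tξ) ≤ exp(t² E ξ²)` for `|t| ≤ λ/3`. -/
theorem stmt3 {Ω : Type*} [MeasurableSpace Ω] (μ : Measure Ω) [IsProbabilityMeasure μ]
    (ξ : Ω → ℝ) (hmeas : Measurable ξ) (l : ℝ) (hl : 0 < l)
    (hmean : ∫ ω, ξ ω ∂μ = 0)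
    (hvar_int : Integrable (fun ω => (ξ ω) ^ 2) μ)
    (hvar_pos : 0 < ∫ ω, (ξ ω) ^ 2 ∂μ)
    (hsak_int : Integrable (fun ω => |ξ ω| ^ 3 * Real.exp (l * |ξ ω|)) μ)
    (hsak : l * ∫ ω, |ξ ω| ^ 3 * Real.exp (l * |ξ ω|) ∂μ ≤ ∫ ω, (ξ ω) ^ 2 ∂μ) :
    ∀ t : ℝ, |t| ≤ l / 3 →
      ∫ ω, Real.exp (t * ξ ω) ∂μ ≤ Real.exp (t ^ 2 * ∫ ω, (ξ ω) ^ 2 ∂μ) := by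
  intro t ht
  set C := ∫ ω, (ξ ω) ^ 2 ∂μ with hC
  set S := ∫ ω, |ξ ω| ^ 3 * Real.exp (l * |ξ ω|) ∂μ with hS
  have hS0 : 0 ≤ S := by
    apply integral_nonneg
    intro ω
    positivity
  have htl : |t| ≤ l := le_trans ht (by linarith)
  -- ξ is integrable
  have hξint : Integrable ξ μ := by
    apply Integrable.mono' ((integrable_const (1:ℝ)).add hvar_int)
      hmeas.aestronglyMeasurable
    filter_upwards with ω
    have : |ξ ω| ≤ 1 + (ξ ω)^2 := by nlinarith [sq_nonneg (|ξ ω| - 1), sq_abs (ξ ω)]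
    simpa [Real.norm_eq_abs] using this
  set g : Ω → ℝ := fun ω =>
    1 + t * ξ ω + t^2 * (ξ ω)^2 / 2 + |t|^3 * (|ξ ω|^3 * Real.exp (l * |ξ ω|)) / 6 with hg
  have hgint : Integrable g μ := by
    apply Integrable.add
    apply Integrable.add
    apply Integrable.add
    · exact integrable_const 1
    · exact hξint.const_mul t
    · exact (hvar_int.const_mul (t^2)).div_const 2
    · exact (hsak_int.const_mul (|t|^3)).div_const 6
  have hpt : ∀ ω, Real.exp (t * ξ ω) ≤ g ω := by
    intro ω
    have hA := LA (t * ξ ω)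
    have habs : |t * ξ ω| = |t| * |ξ ω| := abs_mul t (ξ ω)
    have hexp : Real.exp (|t| * |ξ ω|) ≤ Real.exp (l * |ξ ω|) :=
      Real.exp_le_exp.mpr (mul_le_mul_of_nonneg_right htl (abs_nonneg _))
    have h1 : |t * ξ ω|^3 * Real.exp |t * ξ ω| ≤ |t|^3 * (|ξ ω|^3 * Real.exp (l * |ξ ω|)) := by
      rw [habs, mul_pow]
      have h2 : 0 ≤ |t|^3 * |ξ ω|^3 := by positivity
      calc |t|^3 * |ξ ω|^3 * Real.exp (|t| * |ξ ω|)
          ≤ |t|^3 * |ξ ω|^3 * Real.exp (l * |ξ ω|) := mul_le_mul_of_nonneg_left hexp h2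
        _ = |t|^3 * (|ξ ω|^3 * Real.exp (l * |ξ ω|)) := by ring
    have hsq : (t * ξ ω)^2 = t^2 * (ξ ω)^2 := by ring
    simp only [hg]
    nlinarith [hA]
  have hexp_int : Integrable (fun ω => Real.exp (t * ξ ω)) μ := by
    apply Integrable.mono' hgint
      (((hmeas.const_mul t).exp).aestronglyMeasurable)
    filter_upwards with ω
    rw [Real.norm_eq_abs, abs_of_pos (Real.exp_pos _)]
    exact hpt ω
  have hle : ∫ ω, Real.exp (t * ξ ω) ∂μ ≤ ∫ ω, g ω ∂μ :=
    integral_mono hexp_int hgint hpt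
  have hgval : ∫ ω, g ω ∂μ = 1 + t * 0 + t^2 * C / 2 + |t|^3 * S / 6 := by
    simp only [hg]
    rw [integral_add, integral_add, integral_add]
    · rw [integral_const]
      simp only [measure_univ, probReal_univ, ENNReal.toReal_one, smul_eq_mul, one_mul]
      rw [integral_const_mul, integral_div, integral_const_mul, integral_div, integral_const_mul,
        hmean]
    · exact integrable_const 1
    · exact hξint.const_mul t
    · exact (integrable_const 1).add (hξint.const_mul t)
    · exact (hvar_int.const_mul (t^2)).div_const 2
    · exact ((integrable_const 1).add (hξint.const_mul t)).add
        ((hvar_int.const_mul (t^2)).div_const 2)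
    · exact (hsak_int.const_mul (|t|^3)).div_const 6
  have hbound : 1 + t * 0 + t^2 * C / 2 + |t|^3 * S / 6 ≤ Real.exp (t^2 * C) := by
    have h3 : |t|^3 * S ≤ (l/3) * t^2 * S := by
      have : |t|^3 = |t| * t^2 := by
        rw [← sq_abs]; ring
      rw [this]
      have : |t| * t^2 ≤ (l/3) * t^2 := mul_le_mul_of_nonneg_right ht (sq_nonneg t)
      exact mul_le_mul_of_nonneg_right this hS0
    have h4 : l * S ≤ C := hsak
    have h5 : (l/3) * t^2 * S ≤ t^2 * C / 3 := by
      have ht2 : 0 ≤ t^2 := sq_nonneg t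
      nlinarith
    have h6 : 1 + t^2 * C ≤ Real.exp (t^2 * C) := by
      have := Real.add_one_le_exp (t^2 * C)
      linarith
    have hC0 : 0 ≤ t^2 * C := mul_nonneg (sq_nonneg t) (le_of_lt hvar_pos)
    nlinarith
  calc ∫ ω, Real.exp (t * ξ ω) ∂μ ≤ 1 + t * 0 + t^2 * C / 2 + |t|^3 * S / 6 := by
        rw [← hgval]; exact hle
    _ ≤ Real.exp (t^2 * C) := hbound
end

section
/- Let ξ₁,...,ξₙ be independent real random variables with E ξᵢ = 0, 0 < E ξᵢ² < ∞, and λ E[|ξᵢ|³ exp(λ|ξᵢ|)] ≤ E ξᵢ² for all i, where λ > 0. Set Sₙ = ξ₁+...+ξₙ, Bₙ² = E Sₙ², and Sₙ* = Sₙ · 1(|Sₙ| ≤ Bₙ²). Then E exp(c₁ (Sₙ*/Bₙ)²) ≤ 1 + 2/c₁, where c₁ = (1/4) min(λ/3, 1/2). -/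
open MeasureTheory ProbabilityTheory Set Nat Filter


lemma exp_le_quadratic_of_nonpos {y : ℝ} (hy : y ≤ 0) : Real.exp y ≤ 1 + y + y ^ 2 / 2 := by
  have hd : ∀ x : ℝ, HasDerivAt (fun y => Real.exp y - (1 + y + y ^ 2 / 2))
      (Real.exp x - (1 + x)) x := by
    intro x
    have h1 := Real.hasDerivAt_exp x
    have h2 : HasDerivAt (fun y : ℝ => 1 + y + y ^ 2 / 2) (0 + 1 + 2 * x ^ 1 / 2) x :=
      (((hasDerivAt_const x (1:ℝ)).add (hasDerivAt_id x)).add ((hasDerivAt_pow 2 x).div_const 2))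
    have := h1.sub h2
    refine this.congr_deriv ?_
    ring
  have hmono : Monotone (fun y => Real.exp y - (1 + y + y ^ 2 / 2)) := by
    apply monotone_of_deriv_nonneg
    · exact fun x => (hd x).differentiableAt
    · intro x
      rw [(hd x).deriv]
      have := Real.add_one_le_exp x
      linarith
  have h := hmono hy
  simp only [Real.exp_zero] at h
  nlinarith [h]

lemma exp_le_taylor_three (y : ℝ) :
    Real.exp y ≤ 1 + y + y ^ 2 / 2 + |y| ^ 3 / 6 * Real.exp |y| := by
  rcases le_or_gt y 0 with hy | hy
  · have h := exp_le_quadratic_of_nonpos hy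
    have h2 : 0 ≤ |y| ^ 3 / 6 * Real.exp |y| := by positivity
    linarith
  · have hy' : 0 ≤ y := hy.le
    rw [abs_of_nonneg hy']
    have hsum : Summable (fun n : ℕ => y ^ n / n !) := Real.summable_pow_div_factorial y
    have hexp : Real.exp y = ∑' n : ℕ, y ^ n / n ! := by
      rw [Real.exp_eq_exp_ℝ, NormedSpace.exp_eq_tsum_div]
    have hsplit : ∑ i ∈ Finset.range 3, y ^ i / i ! + ∑' n : ℕ, y ^ (n + 3) / (n + 3)! =
        ∑' n : ℕ, y ^ n / n ! := hsum.sum_add_tsum_nat_add 3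
    have hshift : Summable (fun n : ℕ => y ^ (n + 3) / (n + 3)!) :=
      (summable_nat_add_iff 3).2 hsum
    have htail : (∑' n : ℕ, y ^ (n + 3) / (n + 3)!) ≤ ∑' n : ℕ, y ^ 3 / 6 * (y ^ n / n !) := by
      refine Summable.tsum_le_tsum (fun n => ?_) hshift (hsum.mul_left _)
      have hfacn : (6 : ℕ) * n ! ≤ (n + 3)! := by
        have hdvd : 3 ! * n ! ∣ (3 + n)! := Nat.factorial_mul_factorial_dvd_factorial_add 3 n
        have hle := Nat.le_of_dvd (Nat.factorial_pos _) hdvd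
        simpa [Nat.add_comm, Nat.factorial] using hle
      have hfac : (6 : ℝ) * n ! ≤ ((n + 3)! : ℝ) := by exact_mod_cast hfacn
      have hpos : (0:ℝ) < 6 * n ! := by positivity
      have h1 : y ^ (n + 3) / ((n+3)! : ℝ) ≤ y ^ (n + 3) / (6 * n !) :=
        div_le_div_of_nonneg_left (pow_nonneg hy' _) hpos hfac
      calc y ^ (n + 3) / ((n+3)! : ℝ) ≤ y ^ (n + 3) / (6 * n !) := h1
        _ = y ^ 3 / 6 * (y ^ n / n !) := by rw [pow_add]; ring
    have hmul : ∑' n : ℕ, y ^ 3 / 6 * (y ^ n / n !) = y ^ 3 / 6 * Real.exp y := by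
      rw [tsum_mul_left, ← hexp]
    have hrange : ∑ i ∈ Finset.range 3, y ^ i / i ! = 1 + y + y ^ 2 / 2 := by
      rw [Finset.sum_range_succ, Finset.sum_range_succ, Finset.sum_range_succ,
        Finset.sum_range_zero]
      norm_num [Nat.factorial]
    have hT := htail.trans_eq hmul
    calc Real.exp y = ∑' n : ℕ, y ^ n / n ! := hexp
      _ = (1 + y + y ^ 2 / 2) + ∑' n : ℕ, y ^ (n + 3) / (n + 3)! := by
          rw [← hsplit, hrange]
      _ ≤ 1 + y + y ^ 2 / 2 + y ^ 3 / 6 * Real.exp y := by linarith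


section aux
variable {Ω : Type*} [MeasurableSpace Ω] {μ : Measure Ω} [IsProbabilityMeasure μ]

lemma integrable_exp_mul_abs' {X : Ω → ℝ} (hX : Measurable X) {l : ℝ} (hl : 0 < l)
    (h3 : Integrable (fun ω => |X ω| ^ 3 * Real.exp (l * |X ω|)) μ) :
    Integrable (fun ω => Real.exp (l * |X ω|)) μ := by
  refine ((integrable_const (Real.exp l)).add h3).mono
    ((hX.abs.const_mul l).exp.aestronglyMeasurable) (Filter.Eventually.of_forall fun ω => ?_)
  have h3nn : 0 ≤ |X ω| ^ 3 * Real.exp (l * |X ω|) := by positivity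
  simp only [Pi.add_apply, Real.norm_eq_abs]
  rw [abs_of_nonneg (Real.exp_pos (l * |X ω|)).le, abs_of_nonneg
    (show (0:ℝ) ≤ Real.exp l + |X ω| ^ 3 * Real.exp (l * |X ω|) by positivity)]
  rcases le_or_gt (|X ω|) 1 with h | h
  · have h1 : l * |X ω| ≤ l := by nlinarith [abs_nonneg (X ω)]
    have h2 := Real.exp_le_exp.mpr h1
    linarith
  · have h1 : (1:ℝ) ≤ |X ω| ^ 3 := by
      simpa using pow_le_pow_left₀ zero_le_one h.le 3
    nlinarith [Real.exp_pos l, Real.exp_pos (l * |X ω|)]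

lemma integrable_of_sq' {X : Ω → ℝ} (hX : Measurable X)
    (h2 : Integrable (fun ω => X ω ^ 2) μ) : Integrable X μ :=
  ((memLp_two_iff_integrable_sq hX.aestronglyMeasurable).2 h2).integrable one_le_two

lemma mgf_le_of_sakhanenko {X : Ω → ℝ} (hX : Measurable X) {l t : ℝ} (hl : 0 < l)
    (ht : |t| ≤ l / 3)
    (hmean : ∫ ω, X ω ∂μ = 0) (h2 : Integrable (fun ω => X ω ^ 2) μ)
    (h3 : Integrable (fun ω => |X ω| ^ 3 * Real.exp (l * |X ω|)) μ)
    (hsak : l * ∫ ω, |X ω| ^ 3 * Real.exp (l * |X ω|) ∂μ ≤ ∫ ω, X ω ^ 2 ∂μ) :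
    Integrable (fun ω => Real.exp (t * X ω)) μ ∧
      ∫ ω, Real.exp (t * X ω) ∂μ ≤ Real.exp (t ^ 2 * ∫ ω, X ω ^ 2 ∂μ) := by
  have htl : |t| ≤ l := by linarith
  have habs : ∀ ω, t * X ω ≤ l * |X ω| := fun ω => by
    calc t * X ω ≤ |t * X ω| := le_abs_self _
      _ = |t| * |X ω| := abs_mul _ _
      _ ≤ l * |X ω| := mul_le_mul_of_nonneg_right htl (abs_nonneg _)
  have hIexp := integrable_exp_mul_abs' hX hl h3
  have hint : Integrable (fun ω => Real.exp (t * X ω)) μ := by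
    refine hIexp.mono ((hX.const_mul t).exp.aestronglyMeasurable)
      (Filter.Eventually.of_forall fun ω => ?_)
    rw [Real.norm_eq_abs, abs_of_nonneg (Real.exp_pos _).le, Real.norm_eq_abs,
      abs_of_nonneg (Real.exp_pos _).le]
    exact Real.exp_le_exp.mpr (habs ω)
  refine ⟨hint, ?_⟩
  have hXint : Integrable X μ := integrable_of_sq' hX h2
  -- pointwise bound
  have hpw : ∀ ω, Real.exp (t * X ω) ≤
      1 + t * X ω + t ^ 2 * X ω ^ 2 / 2 + |t| ^ 3 / 6 * (|X ω| ^ 3 * Real.exp (l * |X ω|)) := by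
    intro ω
    have h := exp_le_taylor_three (t * X ω)
    have e1 : |t * X ω| = |t| * |X ω| := abs_mul _ _
    have e2 : Real.exp |t * X ω| ≤ Real.exp (l * |X ω|) := by
      rw [e1]; exact Real.exp_le_exp.mpr (mul_le_mul_of_nonneg_right htl (abs_nonneg _))
    have e3 : (t * X ω) ^ 2 = t ^ 2 * X ω ^ 2 := by ring
    have e4 : |t * X ω| ^ 3 = |t| ^ 3 * |X ω| ^ 3 := by rw [e1]; ring
    have e5 : |t * X ω| ^ 3 / 6 * Real.exp |t * X ω| ≤
        |t| ^ 3 / 6 * (|X ω| ^ 3 * Real.exp (l * |X ω|)) := by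
      rw [e4]
      have hnn : 0 ≤ |t| ^ 3 * |X ω| ^ 3 / 6 := by positivity
      calc |t| ^ 3 * |X ω| ^ 3 / 6 * Real.exp |t * X ω|
          ≤ |t| ^ 3 * |X ω| ^ 3 / 6 * Real.exp (l * |X ω|) :=
            mul_le_mul_of_nonneg_left e2 hnn
        _ = |t| ^ 3 / 6 * (|X ω| ^ 3 * Real.exp (l * |X ω|)) := by ring
    calc Real.exp (t * X ω) ≤ 1 + t * X ω + (t * X ω) ^ 2 / 2
          + |t * X ω| ^ 3 / 6 * Real.exp |t * X ω| := h
      _ ≤ 1 + t * X ω + t ^ 2 * X ω ^ 2 / 2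
          + |t| ^ 3 / 6 * (|X ω| ^ 3 * Real.exp (l * |X ω|)) := by
          rw [e3] at *; linarith [e5]
  -- integrate
  have i1 : Integrable (fun _ : Ω => (1:ℝ)) μ := integrable_const 1
  have i2 : Integrable (fun ω => t * X ω) μ := hXint.const_mul t
  have i3 : Integrable (fun ω => t ^ 2 * X ω ^ 2 / 2) μ := (h2.const_mul _).div_const 2
  have i4 : Integrable (fun ω => |t| ^ 3 / 6 * (|X ω| ^ 3 * Real.exp (l * |X ω|))) μ :=
    h3.const_mul _
  have i12 : Integrable (fun ω => 1 + t * X ω) μ := i1.add i2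
  have i123 : Integrable (fun ω => 1 + t * X ω + t ^ 2 * X ω ^ 2 / 2) μ := i12.add i3
  have hRint : Integrable (fun ω => 1 + t * X ω + t ^ 2 * X ω ^ 2 / 2
      + |t| ^ 3 / 6 * (|X ω| ^ 3 * Real.exp (l * |X ω|))) μ := i123.add i4
  have hIle := integral_mono hint hRint (fun ω => hpw ω)
  set σ2 := ∫ ω, X ω ^ 2 ∂μ with hσ2
  set I3 := ∫ ω, |X ω| ^ 3 * Real.exp (l * |X ω|) ∂μ with hI3
  have hIeq : ∫ ω, (1 + t * X ω + t ^ 2 * X ω ^ 2 / 2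
      + |t| ^ 3 / 6 * (|X ω| ^ 3 * Real.exp (l * |X ω|))) ∂μ
      = 1 + t ^ 2 * σ2 / 2 + |t| ^ 3 / 6 * I3 := by
    rw [integral_add i123 i4, integral_add i12 i3, integral_add i1 i2]
    simp only [integral_const, measure_univ, ENNReal.toReal_one, probReal_univ, smul_eq_mul, one_mul]
    rw [integral_const_mul, hmean, integral_div, integral_const_mul, integral_const_mul]
    simp only [← hσ2, ← hI3]
    ring
  rw [hIeq] at hIle
  -- arithmetic
  have hσ2nn : 0 ≤ σ2 := integral_nonneg fun ω => sq_nonneg _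
  have hI3nn : 0 ≤ I3 := integral_nonneg fun ω => by positivity
  have ht3 : |t| ^ 3 ≤ l / 3 * t ^ 2 := by
    have h1 : |t| ^ 3 = |t| * t ^ 2 := by rw [← sq_abs]; ring
    have := mul_le_mul_of_nonneg_right ht (sq_nonneg t)
    linarith
  have hstep : |t| ^ 3 / 6 * I3 ≤ t ^ 2 * σ2 / 18 := by
    have h1 : |t| ^ 3 / 6 * I3 ≤ l / 3 * t ^ 2 / 6 * I3 :=
      mul_le_mul_of_nonneg_right (by linarith) hI3nn
    have h2 : l * I3 ≤ σ2 := hsak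
    nlinarith [sq_nonneg t]
  have hfin : 1 + t ^ 2 * σ2 / 2 + |t| ^ 3 / 6 * I3 ≤ Real.exp (t ^ 2 * σ2) := by
    have h1 := Real.add_one_le_exp (t ^ 2 * σ2)
    have h2 : 0 ≤ t ^ 2 * σ2 := mul_nonneg (sq_nonneg t) hσ2nn
    linarith
  exact hIle.trans hfin

end aux


set_option maxHeartbeats 2000000 in
/-- For independent centered `ξ₁,…,ξₙ` satisfying Sakhanenko's condition, with
`Sₙ = Σ ξᵢ`, `Bₙ² = E Sₙ²` and `Sₙ* = Sₙ 1(|Sₙ| ≤ Bₙ²)`, one has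
`E exp(c₁ (Sₙ*/Bₙ)²) ≤ 1 + 2/c₁` where `c₁ = (1/4) min(λ/3, 1/2)`. -/
theorem stmt5 {Ω : Type*} [MeasurableSpace Ω] (μ : Measure Ω) [IsProbabilityMeasure μ]
    (n : ℕ) (ξ : Fin n → Ω → ℝ) (hmeas : ∀ i, Measurable (ξ i))
    (hindep : iIndepFun ξ μ)
    (l : ℝ) (hl : 0 < l)
    (hmean : ∀ i, ∫ ω, ξ i ω ∂μ = 0)
    (hvar_int : ∀ i, Integrable (fun ω => (ξ i ω) ^ 2) μ)
    (hvar_pos : ∀ i, 0 < ∫ ω, (ξ i ω) ^ 2 ∂μ)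
    (hsak_int : ∀ i, Integrable (fun ω => |ξ i ω| ^ 3 * Real.exp (l * |ξ i ω|)) μ)
    (hsak : ∀ i, l * ∫ ω, |ξ i ω| ^ 3 * Real.exp (l * |ξ i ω|) ∂μ ≤ ∫ ω, (ξ i ω) ^ 2 ∂μ) :
    let S : Ω → ℝ := fun ω => ∑ i, ξ i ω
    let B2 : ℝ := ∫ ω, (S ω) ^ 2 ∂μ
    let B : ℝ := Real.sqrt B2
    let Sstar : Ω → ℝ := fun ω => if |S ω| ≤ B2 then S ω else 0
    let c₁ : ℝ := (1 / 4) * min (l / 3) (1 / 2)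
    ∫ ω, Real.exp (c₁ * (Sstar ω / B) ^ 2) ∂μ ≤ 1 + 2 / c₁ := by
  intro S B2 B Sstar c₁
  have hc₁ : c₁ = 1 / 4 * min (l / 3) (1 / 2) := rfl
  have hSdef : S = fun ω => ∑ i, ξ i ω := rfl
  have hB2def : B2 = ∫ ω, (S ω) ^ 2 ∂μ := rfl
  have hBdef : B = Real.sqrt B2 := rfl
  have hSstardef : Sstar = fun ω => if |S ω| ≤ B2 then S ω else 0 := rfl
  clear_value S B2 B Sstar c₁
  have hminpos : (0:ℝ) < min (l / 3) (1 / 2) := lt_min (by linarith) (by norm_num)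
  have hc₁pos : 0 < c₁ := by rw [hc₁]; linarith
  have hSmeas : Measurable S := by
    rw [hSdef]; exact Finset.measurable_sum _ fun i _ => hmeas i
  have hB2nonneg : 0 ≤ B2 := by
    rw [hB2def]; exact integral_nonneg fun ω => sq_nonneg _
  by_cases hB20 : B2 = 0
  · have hB : B = 0 := by rw [hBdef, hB20, Real.sqrt_zero]
    have h2c : (0:ℝ) ≤ 2 / c₁ := by positivity
    calc ∫ ω, Real.exp (c₁ * (Sstar ω / B) ^ 2) ∂μ
        = ∫ _ω, (1:ℝ) ∂μ := by
          apply integral_congr_ae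
          filter_upwards with ω
          rw [hB, div_zero]
          norm_num
      _ = 1 := by simp
      _ ≤ 1 + 2 / c₁ := by linarith
  have hB2pos : 0 < B2 := lt_of_le_of_ne hB2nonneg (Ne.symm hB20)
  have hBpos : 0 < B := by rw [hBdef]; exact Real.sqrt_pos.2 hB2pos
  have hBB : B ^ 2 = B2 := by rw [hBdef]; exact Real.sq_sqrt hB2nonneg
  set σ2 : Fin n → ℝ := fun i => ∫ ω, ξ i ω ^ 2 ∂μ with hσ2def
  have hint_i : ∀ i, Integrable (ξ i) μ := fun i => integrable_of_sq' (hmeas i) (hvar_int i)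
  have hmem : ∀ i, MemLp (ξ i) 2 μ := fun i =>
    (memLp_two_iff_integrable_sq (hmeas i).aestronglyMeasurable).2 (hvar_int i)
  have hSsum : S = ∑ i, ξ i := by
    funext ω; rw [hSdef, Finset.sum_apply]
  have hB2sum : B2 = ∑ i, σ2 i := by
    have hpair : Set.Pairwise ↑(Finset.univ : Finset (Fin n))
        fun i j => IndepFun (ξ i) (ξ j) μ := fun i _ j _ hij => hindep.indepFun hij
    have hvs := IndepFun.variance_sum (μ := μ) (fun i (_ : i ∈ Finset.univ) => hmem i) hpair
    have hmemS : MemLp S 2 μ := by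
      rw [hSsum]; exact memLp_finset_sum' _ fun i _ => hmem i
    have hES : ∫ ω, S ω ∂μ = 0 := by
      rw [hSdef, integral_finset_sum _ fun i _ => hint_i i]
      simp [hmean]
    have hvarS : variance S μ = B2 := by
      rw [variance_eq_sub hmemS, hB2def]
      have h1 : μ[S ^ 2] = ∫ ω, S ω ^ 2 ∂μ := by
        apply integral_congr_ae; filter_upwards with ω; simp
      have h2 : μ[S] = 0 := hES
      rw [h1, h2]
      ring
    have hvar_i : ∀ i, variance (ξ i) μ = σ2 i := by
      intro i
      rw [variance_eq_sub (hmem i)]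
      have h1 : μ[(ξ i) ^ 2] = σ2 i := by
        apply integral_congr_ae; filter_upwards with ω; simp
      rw [h1, hmean i]
      ring
    rw [← hvarS, hSsum, hvs]
    exact Finset.sum_congr rfl fun i _ => hvar_i i
  -- MGF bound for S
  have hmgfS : ∀ t : ℝ, |t| ≤ l / 3 → Integrable (fun ω => Real.exp (t * S ω)) μ ∧
      ∫ ω, Real.exp (t * S ω) ∂μ ≤ Real.exp (t ^ 2 * B2) := by
    intro t ht
    have h_each := fun i =>
      mgf_le_of_sakhanenko (μ := μ) (hmeas i) hl ht (hmean i) (hvar_int i) (hsak_int i) (hsak i)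
    have hintS : Integrable (fun ω => Real.exp (t * S ω)) μ := by
      have h := hindep.integrable_exp_mul_sum (s := Finset.univ) hmeas
        (fun i _ => (h_each i).1)
      have he : (fun ω => Real.exp (t * (∑ i, ξ i) ω)) = fun ω => Real.exp (t * S ω) := by
        funext ω; rw [← hSsum]
      rwa [he] at h
    refine ⟨hintS, ?_⟩
    have hmgf : mgf S μ t = ∏ i, mgf (ξ i) μ t := by
      rw [hSsum]; exact hindep.mgf_sum hmeas Finset.univ
    have hdef : ∫ ω, Real.exp (t * S ω) ∂μ = mgf S μ t := rfl
    rw [hdef, hmgf]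
    calc ∏ i, mgf (ξ i) μ t ≤ ∏ i, Real.exp (t ^ 2 * σ2 i) :=
        Finset.prod_le_prod (fun i _ => mgf_nonneg) (fun i _ => (h_each i).2)
      _ = Real.exp (∑ i, t ^ 2 * σ2 i) := by rw [Real.exp_sum]
      _ = Real.exp (t ^ 2 * B2) := by rw [← Finset.mul_sum, ← hB2sum]
  -- Chernoff tail bound
  have htail : ∀ x : ℝ, 0 < x → x ≤ B2 →
      (μ {ω | x ≤ |S ω|}).toReal ≤ 2 * Real.exp (-(2 * c₁) * (x ^ 2 / B2)) := by
    intro x hx hxB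
    set t₀ : ℝ := min (x / (2 * B2)) (l / 3) with ht₀def
    have ht₀nn : 0 ≤ t₀ := le_min (by positivity) (by linarith)
    have ht₀abs : |t₀| ≤ l / 3 := by
      rw [abs_of_nonneg ht₀nn]; exact min_le_right _ _
    obtain ⟨hi1, hb1⟩ := hmgfS t₀ ht₀abs
    obtain ⟨hi2, hb2⟩ := hmgfS (-t₀) (by rwa [abs_neg])
    have h1 : (μ {ω | x ≤ S ω}).toReal ≤ Real.exp (-t₀ * x) * Real.exp (t₀ ^ 2 * B2) := by
      refine (measure_ge_le_exp_mul_mgf (μ := μ) (X := S) x ht₀nn hi1).trans ?_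
      exact mul_le_mul_of_nonneg_left hb1 (Real.exp_pos _).le
    have h2 : (μ {ω | x ≤ -S ω}).toReal ≤ Real.exp (-t₀ * x) * Real.exp (t₀ ^ 2 * B2) := by
      have hi2' : Integrable (fun ω => Real.exp (t₀ * (fun ω' => -S ω') ω)) μ := by
        have he : (fun ω => Real.exp (t₀ * (fun ω' => -S ω') ω))
            = fun ω => Real.exp (-t₀ * S ω) := by funext ω; ring_nf
        rw [he]; exact hi2
      refine (measure_ge_le_exp_mul_mgf (μ := μ) (X := fun ω => -S ω) x ht₀nn hi2').trans ?_
      have hm : mgf (fun ω => -S ω) μ t₀ = ∫ ω, Real.exp (-t₀ * S ω) ∂μ := by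
        apply integral_congr_ae; filter_upwards with ω; ring_nf
      rw [hm]
      have hsq : (-t₀) ^ 2 = t₀ ^ 2 := by ring
      refine mul_le_mul_of_nonneg_left ?_ (Real.exp_pos _).le
      calc ∫ ω, Real.exp (-t₀ * S ω) ∂μ ≤ Real.exp ((-t₀) ^ 2 * B2) := hb2
        _ = Real.exp (t₀ ^ 2 * B2) := by rw [hsq]
    have hexp : Real.exp (-t₀ * x) * Real.exp (t₀ ^ 2 * B2)
        ≤ Real.exp (-(2 * c₁) * (x ^ 2 / B2)) := by
      rw [← Real.exp_add, Real.exp_le_exp]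
      have hmin4 : 4 * c₁ = min (l / 3) (1 / 2) := by rw [hc₁]; ring
      have hge : 4 * c₁ * (x / B2) ≤ t₀ := by
        apply le_min
        · have h4 : 4 * c₁ ≤ 1 / 2 := by rw [hmin4]; exact min_le_right _ _
          have hxd : 0 ≤ x / B2 := by positivity
          have := mul_le_mul_of_nonneg_right h4 hxd
          calc 4 * c₁ * (x / B2) ≤ 1 / 2 * (x / B2) := this
            _ = x / (2 * B2) := by ring
        · have h4 : 4 * c₁ ≤ l / 3 := by rw [hmin4]; exact min_le_left _ _
          have hxr : x / B2 ≤ 1 := (div_le_one hB2pos).2 hxB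
          nlinarith [hc₁pos]
      have hle2 : t₀ ≤ x / (2 * B2) := min_le_left _ _
      have hq : t₀ ^ 2 * B2 ≤ t₀ * x / 2 := by
        have h := mul_le_mul_of_nonneg_left hle2 ht₀nn
        have h3 := mul_le_mul_of_nonneg_right h hB2nonneg
        have h4 : t₀ * (x / (2 * B2)) * B2 = t₀ * x / 2 := by
          field_simp
        rw [h4] at h3
        nlinarith [h3]
      have hg : 2 * c₁ * (x ^ 2 / B2) ≤ t₀ * x / 2 := by
        have := mul_le_mul_of_nonneg_right hge hx.le
        have he : 4 * c₁ * (x / B2) * x = 4 * c₁ * (x ^ 2 / B2) := by ring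
        rw [he] at this
        linarith
      linarith
    have hsub : {ω | x ≤ |S ω|} ⊆ {ω | x ≤ S ω} ∪ {ω | x ≤ -S ω} := by
      intro ω hω
      simp only [Set.mem_setOf_eq] at hω
      rcases le_abs.1 hω with h | h
      exacts [Or.inl h, Or.inr h]
    have hμ : μ {ω | x ≤ |S ω|} ≤ μ {ω | x ≤ S ω} + μ {ω | x ≤ -S ω} :=
      (measure_mono hsub).trans (measure_union_le _ _)
    calc (μ {ω | x ≤ |S ω|}).toReal
        ≤ (μ {ω | x ≤ S ω} + μ {ω | x ≤ -S ω}).toReal :=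
          ENNReal.toReal_mono (by finiteness) hμ
      _ = (μ {ω | x ≤ S ω}).toReal + (μ {ω | x ≤ -S ω}).toReal :=
          ENNReal.toReal_add (measure_ne_top _ _) (measure_ne_top _ _)
      _ ≤ 2 * (Real.exp (-t₀ * x) * Real.exp (t₀ ^ 2 * B2)) := by linarith
      _ ≤ 2 * Real.exp (-(2 * c₁) * (x ^ 2 / B2)) := by linarith [hexp]
  -- properties of Sstar
  have hSstarmeas : Measurable Sstar := by
    rw [hSstardef]
    exact Measurable.ite (measurableSet_le hSmeas.abs measurable_const) hSmeas measurable_const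
  have hSstar_le : ∀ ω, |Sstar ω| ≤ B2 := by
    intro ω
    simp only [hSstardef]
    by_cases h : |S ω| ≤ B2
    · rw [if_pos h]; exact h
    · rw [if_neg h]; simpa using hB2nonneg
  have hf_le : ∀ ω, (Sstar ω / B) ^ 2 ≤ B2 := by
    intro ω
    rw [div_pow, hBB]
    rw [div_le_iff₀ hB2pos]
    have h1 : Sstar ω ^ 2 ≤ B2 ^ 2 := by
      rw [← sq_abs]
      exact pow_le_pow_left₀ (abs_nonneg _) (hSstar_le ω) 2
    nlinarith
  have hgcont : Continuous fun t : ℝ => c₁ * Real.exp (c₁ * t) :=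
    continuous_const.mul (Real.continuous_exp.comp (continuous_const.mul continuous_id))
  -- inner integral computation
  have hinner : ∀ y : ℝ, (∫ t in (0:ℝ)..y, c₁ * Real.exp (c₁ * t)) = Real.exp (c₁ * y) - 1 := by
    intro y
    have hd : ∀ t ∈ uIcc (0:ℝ) y,
        HasDerivAt (fun s => Real.exp (c₁ * s)) (c₁ * Real.exp (c₁ * t)) t := by
      intro t _
      have h1 : HasDerivAt (fun s : ℝ => c₁ * s) c₁ t := by
        simpa using (hasDerivAt_id t).const_mul c₁
      have h2 := h1.exp
      convert h2 using 1
      rw [mul_comm]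
    rw [intervalIntegral.integral_eq_sub_of_hasDerivAt hd (hgcont.intervalIntegrable _ _)]
    simp
  -- layer cake
  have hlayer := lintegral_comp_eq_lintegral_meas_le_mul μ
    (f := fun ω => (Sstar ω / B) ^ 2) (g := fun t => c₁ * Real.exp (c₁ * t))
    (Eventually.of_forall fun ω => sq_nonneg _)
    (((hSstarmeas.div_const B).pow_const 2).aemeasurable)
    (fun t _ => hgcont.intervalIntegrable _ _)
    (Eventually.of_forall fun t => by positivity)
  -- tail bound for the squared variable
  have htail2 : ∀ t ∈ Ioi (0:ℝ), μ {a | t ≤ (Sstar a / B) ^ 2}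
      ≤ ENNReal.ofReal (2 * Real.exp (-(2 * c₁) * t)) := by
    intro t ht
    rw [mem_Ioi] at ht
    by_cases htB : t ≤ B2
    · set x : ℝ := B * Real.sqrt t with hxdef
      have hst : (0:ℝ) < Real.sqrt t := Real.sqrt_pos.2 ht
      have hx : 0 < x := mul_pos hBpos hst
      have hxB : x ≤ B2 := by
        have h1 : Real.sqrt t ≤ Real.sqrt B2 := Real.sqrt_le_sqrt htB
        have h2 : B * Real.sqrt t ≤ B * Real.sqrt B2 :=
          mul_le_mul_of_nonneg_left h1 hBpos.le
        have h3 : B * Real.sqrt B2 = B2 := by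
          rw [← hBdef]; nlinarith [hBB]
        rw [hxdef]; linarith
      have hx2 : x ^ 2 = B2 * t := by
        rw [hxdef, mul_pow, hBB, Real.sq_sqrt ht.le]
      have hsub : {a | t ≤ (Sstar a / B) ^ 2} ⊆ {ω | x ≤ |S ω|} := by
        intro ω hω
        simp only [Set.mem_setOf_eq] at hω ⊢
        by_cases hc : |S ω| ≤ B2
        · have hSeq : Sstar ω = S ω := by rw [hSstardef]; exact if_pos hc
          rw [hSeq, div_pow, hBB] at hω
          have h1 : t * B2 ≤ S ω ^ 2 := by
            rw [le_div_iff₀ hB2pos] at hω; linarith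
          have h2 : x ^ 2 ≤ S ω ^ 2 := by rw [hx2]; linarith
          have h3 := Real.sqrt_le_sqrt h2
          rwa [Real.sqrt_sq_eq_abs, Real.sqrt_sq_eq_abs, abs_of_pos hx] at h3
        · exfalso
          have hSeq : Sstar ω = 0 := by simp only [hSstardef]; exact if_neg hc
          rw [hSeq] at hω
          simp only [zero_div] at hω
          norm_num at hω
          linarith
      have hbound := htail x hx hxB
      have hx2B : x ^ 2 / B2 = t := by rw [hx2]; field_simp
      rw [hx2B] at hbound
      refine (measure_mono hsub).trans ?_
      rw [ENNReal.le_ofReal_iff_toReal_le (measure_ne_top μ _) (by positivity)]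
      exact hbound
    · have hempty : {a | t ≤ (Sstar a / B) ^ 2} = ∅ := by
        ext ω
        simp only [Set.mem_setOf_eq, Set.mem_empty_iff_false, iff_false, not_le]
        exact lt_of_le_of_lt (hf_le ω) (lt_of_not_ge htB)
      rw [hempty]
      simp
  -- bound the RHS of the layer cake
  have hRHS : (∫⁻ t in Ioi (0:ℝ), μ {a | t ≤ (Sstar a / B) ^ 2}
      * ENNReal.ofReal (c₁ * Real.exp (c₁ * t))) ≤ ENNReal.ofReal 2 := by
    have step1 : (∫⁻ t in Ioi (0:ℝ), μ {a | t ≤ (Sstar a / B) ^ 2}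
        * ENNReal.ofReal (c₁ * Real.exp (c₁ * t)))
        ≤ ∫⁻ t in Ioi (0:ℝ), ENNReal.ofReal (2 * c₁ * Real.exp (-(c₁ * t))) := by
      apply setLIntegral_mono (by fun_prop)
      intro t ht
      calc μ {a | t ≤ (Sstar a / B) ^ 2} * ENNReal.ofReal (c₁ * Real.exp (c₁ * t))
          ≤ ENNReal.ofReal (2 * Real.exp (-(2 * c₁) * t))
            * ENNReal.ofReal (c₁ * Real.exp (c₁ * t)) :=
            mul_le_mul_left (htail2 t ht) _
        _ = ENNReal.ofReal (2 * Real.exp (-(2 * c₁) * t) * (c₁ * Real.exp (c₁ * t))) :=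
            (ENNReal.ofReal_mul (by positivity)).symm
        _ = ENNReal.ofReal (2 * c₁ * Real.exp (-(c₁ * t))) := by
            rw [show 2 * Real.exp (-(2 * c₁) * t) * (c₁ * Real.exp (c₁ * t))
              = 2 * c₁ * (Real.exp (-(2 * c₁) * t) * Real.exp (c₁ * t)) by ring,
              ← Real.exp_add]
            ring_nf
    have hIOn : IntegrableOn (fun t => 2 * c₁ * Real.exp (-(c₁ * t))) (Ioi (0:ℝ)) := by
      simpa only [neg_mul, IntegrableOn] using (exp_neg_integrableOn_Ioi 0 hc₁pos).const_mul (2 * c₁)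
    have step2 : (∫⁻ t in Ioi (0:ℝ), ENNReal.ofReal (2 * c₁ * Real.exp (-(c₁ * t))))
        = ENNReal.ofReal (∫ t in Ioi (0:ℝ), 2 * c₁ * Real.exp (-(c₁ * t))) :=
      (ofReal_integral_eq_lintegral_ofReal hIOn
        (Eventually.of_forall fun t => by positivity)).symm
    have hval : (∫ t in Ioi (0:ℝ), 2 * c₁ * Real.exp (-(c₁ * t))) = 2 := by
      have he0 : (∫ t in Ioi (0:ℝ), 2 * c₁ * Real.exp (-(c₁ * t)))
          = 2 * c₁ * ∫ t in Ioi (0:ℝ), Real.exp (-(c₁ * t)) := integral_const_mul _ _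
      have hcomp := integral_comp_mul_right_Ioi (fun x => Real.exp (-x)) 0 hc₁pos
      simp only [zero_mul] at hcomp
      have he : (∫ t in Ioi (0:ℝ), Real.exp (-(c₁ * t)))
          = ∫ x in Ioi (0:ℝ), Real.exp (-(x * c₁)) := by
        apply setIntegral_congr_fun measurableSet_Ioi
        intro t _
        show Real.exp (-(c₁ * t)) = Real.exp (-(t * c₁))
        rw [mul_comm]
      rw [he0, he, hcomp, integral_exp_neg_Ioi]
      simp only [smul_eq_mul, Real.exp_zero, neg_zero, mul_one]
      field_simp
    rw [step2, hval] at step1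
    exact step1
  -- assemble
  have hkey : (∫⁻ ω, ENNReal.ofReal (Real.exp (c₁ * (Sstar ω / B) ^ 2) - 1) ∂μ)
      ≤ ENNReal.ofReal 2 := by
    have heq : (∫⁻ ω, ENNReal.ofReal (Real.exp (c₁ * (Sstar ω / B) ^ 2) - 1) ∂μ)
        = ∫⁻ ω, ENNReal.ofReal (∫ t in (0:ℝ)..((Sstar ω / B) ^ 2), c₁ * Real.exp (c₁ * t)) ∂μ :=
      lintegral_congr fun ω => by rw [hinner]
    rw [heq, hlayer]
    exact hRHS
  have hIfull : Integrable (fun ω => Real.exp (c₁ * (Sstar ω / B) ^ 2)) μ := by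
    refine (integrable_const (Real.exp (c₁ * B2))).mono
      ((((hSstarmeas.div_const B).pow_const 2).const_mul c₁).exp.aestronglyMeasurable)
      (Eventually.of_forall fun ω => ?_)
    rw [Real.norm_eq_abs, abs_of_nonneg (Real.exp_pos _).le, Real.norm_eq_abs,
      abs_of_nonneg (Real.exp_pos _).le]
    exact Real.exp_le_exp.mpr (mul_le_mul_of_nonneg_left (hf_le ω) hc₁pos.le)
  have hnn1 : ∀ ω, 1 ≤ Real.exp (c₁ * (Sstar ω / B) ^ 2) := fun ω =>
    Real.one_le_exp (by positivity)
  have hle2 : (∫ ω, (Real.exp (c₁ * (Sstar ω / B) ^ 2) - 1) ∂μ) ≤ 2 := by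
    have hmble : AEStronglyMeasurable (fun ω => Real.exp (c₁ * (Sstar ω / B) ^ 2) - 1) μ :=
      (hIfull.sub (integrable_const 1)).aestronglyMeasurable
    have hnn : 0 ≤ᵐ[μ] fun ω => Real.exp (c₁ * (Sstar ω / B) ^ 2) - 1 :=
      Eventually.of_forall fun ω => by have := hnn1 ω; simp only [Pi.zero_apply]; linarith
    rw [integral_eq_lintegral_of_nonneg_ae hnn hmble]
    calc (∫⁻ ω, ENNReal.ofReal (Real.exp (c₁ * (Sstar ω / B) ^ 2) - 1) ∂μ).toReal
        ≤ (ENNReal.ofReal 2).toReal := ENNReal.toReal_mono (by simp) hkey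
      _ = 2 := by simp
  have hsplit : (∫ ω, Real.exp (c₁ * (Sstar ω / B) ^ 2) ∂μ)
      = 1 + ∫ ω, (Real.exp (c₁ * (Sstar ω / B) ^ 2) - 1) ∂μ := by
    have h : (∫ ω, (Real.exp (c₁ * (Sstar ω / B) ^ 2) - 1) ∂μ)
        = (∫ ω, Real.exp (c₁ * (Sstar ω / B) ^ 2) ∂μ) - ∫ _ω, (1:ℝ) ∂μ :=
      integral_sub hIfull (integrable_const 1)
    rw [h]
    simp
  have h2c : (2:ℝ) ≤ 2 / c₁ := by
    have hc₁le1 : c₁ ≤ 1 := by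
      rw [hc₁]
      nlinarith [min_le_right (l / 3) (1 / 2 : ℝ)]
    rw [le_div_iff₀ hc₁pos]
    nlinarith
  rw [hsplit]
  linarith
end

section
/- Let ξ₁,...,ξₙ be independent, each with mean 0 and satisfying λ E[|ξᵢ|³ exp(λ|ξᵢ|)] ≤ E ξᵢ² for some λ > 0. Set Sₙ = Σξᵢ, Bₙ² = Σ E ξᵢ², and Sₙ* = Sₙ 1(|Sₙ| ≤ Bₙ²). Then the tail bound P((Sₙ*/Bₙ)² > x) ≤ 2 exp(-c₂ x) holds for all x ≥ 0, where c₂ = (1/2) min(λ/3, 1/2). -/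
open MeasureTheory ProbabilityTheory

lemma exp_sub_one_le (a : ℝ) (ha : 0 ≤ a) : Real.exp a - 1 ≤ a * Real.exp a := by
  have h := Real.add_one_le_exp (-a)
  rw [Real.exp_neg] at h
  have hp := Real.exp_pos a
  have hinv : (Real.exp a)⁻¹ * Real.exp a = 1 := inv_mul_cancel₀ hp.ne'
  nlinarith [mul_le_mul_of_nonneg_right h hp.le]

lemma exp_le_quad (y : ℝ) : Real.exp y ≤ 1 + y + y ^ 2 / 2 * Real.exp |y| := by
  rcases le_or_gt 0 y with hy | hy
  · rw [abs_of_nonneg hy]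
    have h1 : ∀ s ∈ Set.Icc (0:ℝ) y, Real.exp s - 1 ≤ s * Real.exp y := by
      intro s hs
      calc Real.exp s - 1 ≤ s * Real.exp s := exp_sub_one_le s hs.1
        _ ≤ s * Real.exp y := by
            exact mul_le_mul_of_nonneg_left (Real.exp_le_exp.2 hs.2) hs.1
    have hi1 : IntervalIntegrable (fun s => Real.exp s - 1) volume 0 y :=
      (Real.continuous_exp.sub continuous_const).intervalIntegrable _ _
    have hi2 : IntervalIntegrable (fun s => s * Real.exp y) volume 0 y :=
      (continuous_id.mul continuous_const).intervalIntegrable _ _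
    have hm := intervalIntegral.integral_mono_on hy hi1 hi2 h1
    have e1 : (∫ s in (0:ℝ)..y, (Real.exp s - 1)) = (Real.exp y - 1) - y := by
      rw [intervalIntegral.integral_sub (Real.continuous_exp.intervalIntegrable _ _)
        (intervalIntegrable_const)]
      simp [integral_exp]
    have e2 : (∫ s in (0:ℝ)..y, s * Real.exp y) = y ^ 2 / 2 * Real.exp y := by
      rw [intervalIntegral.integral_mul_const, integral_id]
      ring
    rw [e1, e2] at hm
    linarith
  · rw [abs_of_neg hy]
    set z := -y with hz
    have hz0 : 0 < z := by simp [hz]; linarith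
    have hq : 1 + z + z ^ 2 / 2 ≤ Real.exp z := Real.quadratic_le_exp_of_nonneg hz0.le
    have hey : Real.exp y * Real.exp z = 1 := by
      rw [← Real.exp_add]; simp [hz]
    have hez : (0:ℝ) < Real.exp z := Real.exp_pos z
    have hyz : Real.exp y ≤ 1 - z + z ^ 2 / 2 := by
      nlinarith [Real.exp_pos y]
    have h1 : (1:ℝ) ≤ Real.exp z := Real.one_le_exp hz0.le
    have : y = -z := by rw [hz]; ring
    nlinarith [sq_nonneg y]

lemma integrable_self_of_sq {Ω : Type*} [MeasurableSpace Ω] (μ : Measure Ω)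
    [IsProbabilityMeasure μ] (f : Ω → ℝ) (hm : Measurable f)
    (h2 : Integrable (fun ω => f ω ^ 2) μ) : Integrable f μ := by
  apply Integrable.mono' ((integrable_const (1:ℝ)).add h2) hm.aestronglyMeasurable
  filter_upwards with ω
  have := sq_abs (f ω)
  have := abs_nonneg (f ω)
  simp only [Real.norm_eq_abs, Pi.add_apply]
  nlinarith

lemma key_bound (l t x : ℝ) (hl : 0 < l) (ht : |t| ≤ l) :
    Real.exp (t * x) ≤
      1 + |t| * |x| + t ^ 2 / 2 * (Real.exp l + |x| ^ 3 * Real.exp (l * |x|)) := by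
  have h := exp_le_quad (t * x)
  have habs : |t * x| = |t| * |x| := abs_mul t x
  have h1 : t * x ≤ |t| * |x| := (le_abs_self _).trans habs.le
  have he : (t * x) ^ 2 / 2 * Real.exp |t * x| =
      t ^ 2 / 2 * (x ^ 2 * Real.exp (|t| * |x|)) := by
    rw [habs]; ring
  have h2 : x ^ 2 * Real.exp (|t| * |x|) ≤ Real.exp l + |x| ^ 3 * Real.exp (l * |x|) := by
    rcases le_or_gt |x| 1 with hx | hx
    · have hx2 : x ^ 2 ≤ 1 := by nlinarith [sq_abs x, abs_nonneg x]
      have hee : Real.exp (|t| * |x|) ≤ Real.exp l := by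
        apply Real.exp_le_exp.2
        calc |t| * |x| ≤ l * 1 := by
              apply mul_le_mul ht hx (abs_nonneg x) hl.le
          _ = l := mul_one l
      have hpos : (0:ℝ) ≤ |x| ^ 3 * Real.exp (l * |x|) :=
        mul_nonneg (by positivity) (Real.exp_pos _).le
      nlinarith [Real.exp_pos (|t| * |x|), sq_nonneg x]
    · have hx2 : x ^ 2 ≤ |x| ^ 3 := by
        rw [← sq_abs x]
        exact pow_le_pow_right₀ (by linarith) (by norm_num)
      have hee : Real.exp (|t| * |x|) ≤ Real.exp (l * |x|) := by
        apply Real.exp_le_exp.2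
        exact mul_le_mul_of_nonneg_right ht (abs_nonneg x)
      have := mul_le_mul hx2 hee (Real.exp_pos _).le (by positivity)
      nlinarith [Real.exp_pos l]
  have ht2 : (0:ℝ) ≤ t ^ 2 / 2 := by positivity
  calc Real.exp (t * x) ≤ 1 + t * x + (t * x) ^ 2 / 2 * Real.exp |t * x| := h
    _ = 1 + t * x + t ^ 2 / 2 * (x ^ 2 * Real.exp (|t| * |x|)) := by rw [he]
    _ ≤ 1 + |t| * |x| + t ^ 2 / 2 * (Real.exp l + |x| ^ 3 * Real.exp (l * |x|)) := by
        have := mul_le_mul_of_nonneg_left h2 ht2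
        linarith

lemma key_bound2 (l t x : ℝ) (hl : 0 < l) (ht : |t| ≤ l / 3) :
    Real.exp (t * x) ≤
      1 + t * x + t ^ 2 / 2 * (x ^ 2 + l / 3 * (|x| ^ 3 * Real.exp (l * |x|))) := by
  have h := exp_le_quad (t * x)
  have habs : |t * x| = |t| * |x| := abs_mul t x
  have he : (t * x) ^ 2 / 2 * Real.exp |t * x| =
      t ^ 2 / 2 * (x ^ 2 * Real.exp (|t| * |x|)) := by rw [habs]; ring
  have ha : (0:ℝ) ≤ |t| * |x| := mul_nonneg (abs_nonneg t) (abs_nonneg x)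
  have hre : Real.exp (|t| * |x|) ≤ 1 + (|t| * |x|) * Real.exp (|t| * |x|) := by
    have := exp_sub_one_le (|t| * |x|) ha
    linarith
  have h2 : x ^ 2 * Real.exp (|t| * |x|) ≤
      x ^ 2 + l / 3 * (|x| ^ 3 * Real.exp (l * |x|)) := by
    have hb : x ^ 2 * ((|t| * |x|) * Real.exp (|t| * |x|)) ≤
        l / 3 * (|x| ^ 3 * Real.exp (l * |x|)) := by
      have hee : Real.exp (|t| * |x|) ≤ Real.exp (l * |x|) := by
        apply Real.exp_le_exp.2
        apply mul_le_mul_of_nonneg_right _ (abs_nonneg x)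
        linarith
      have hx3 : x ^ 2 * (|t| * |x|) ≤ l / 3 * |x| ^ 3 := by
        rw [← sq_abs x]
        calc |x| ^ 2 * (|t| * |x|) = |t| * |x| ^ 3 := by ring
          _ ≤ l / 3 * |x| ^ 3 := mul_le_mul_of_nonneg_right ht (by positivity)
      calc x ^ 2 * ((|t| * |x|) * Real.exp (|t| * |x|))
          = (x ^ 2 * (|t| * |x|)) * Real.exp (|t| * |x|) := by ring
        _ ≤ (l / 3 * |x| ^ 3) * Real.exp (l * |x|) := by
            apply mul_le_mul hx3 hee (Real.exp_pos _).le (by positivity)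
        _ = l / 3 * (|x| ^ 3 * Real.exp (l * |x|)) := by ring
    nlinarith [sq_nonneg x, mul_le_mul_of_nonneg_left hre (sq_nonneg x)]
  have ht2 : (0:ℝ) ≤ t ^ 2 / 2 := by positivity
  calc Real.exp (t * x) ≤ 1 + t * x + (t * x) ^ 2 / 2 * Real.exp |t * x| := h
    _ = 1 + t * x + t ^ 2 / 2 * (x ^ 2 * Real.exp (|t| * |x|)) := by rw [he]
    _ ≤ _ := by
        have := mul_le_mul_of_nonneg_left h2 ht2
        linarith

lemma integrable_abs_of_sq {Ω : Type*} [MeasurableSpace Ω] (μ : Measure Ω)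
    [IsProbabilityMeasure μ] (f : Ω → ℝ) (hm : Measurable f)
    (h2 : Integrable (fun ω => f ω ^ 2) μ) : Integrable (fun ω => |f ω|) μ :=
  (integrable_self_of_sq μ f hm h2).abs

lemma integrable_exp_mul {Ω : Type*} [MeasurableSpace Ω] (μ : Measure Ω)
    [IsProbabilityMeasure μ] (f : Ω → ℝ) (hm : Measurable f) (l t : ℝ) (hl : 0 < l)
    (h2 : Integrable (fun ω => f ω ^ 2) μ)
    (h3 : Integrable (fun ω => |f ω| ^ 3 * Real.exp (l * |f ω|)) μ)
    (ht : |t| ≤ l) : Integrable (fun ω => Real.exp (t * f ω)) μ := by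
  have hg : Integrable (fun ω =>
      1 + |t| * |f ω| + t ^ 2 / 2 * (Real.exp l + |f ω| ^ 3 * Real.exp (l * |f ω|))) μ := by
    apply Integrable.add
    · exact (integrable_const 1).add ((integrable_abs_of_sq μ f hm h2).const_mul |t|)
    · exact ((integrable_const (Real.exp l)).add h3).const_mul _
  apply Integrable.mono' hg (hm.const_mul t).exp.aestronglyMeasurable
  filter_upwards with ω
  rw [Real.norm_eq_abs, abs_of_pos (Real.exp_pos _)]
  exact key_bound l t (f ω) hl ht

lemma mgf_le_exp_var {Ω : Type*} [MeasurableSpace Ω] (μ : Measure Ω)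
    [IsProbabilityMeasure μ] (f : Ω → ℝ) (hm : Measurable f) (l t : ℝ) (hl : 0 < l)
    (hmean : ∫ ω, f ω ∂μ = 0)
    (h2 : Integrable (fun ω => f ω ^ 2) μ)
    (h3 : Integrable (fun ω => |f ω| ^ 3 * Real.exp (l * |f ω|)) μ)
    (hsak : l * ∫ ω, |f ω| ^ 3 * Real.exp (l * |f ω|) ∂μ ≤ ∫ ω, f ω ^ 2 ∂μ)
    (ht : |t| ≤ l / 3) :
    mgf f μ t ≤ Real.exp (t ^ 2 * ∫ ω, f ω ^ 2 ∂μ) := by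
  have htl : |t| ≤ l := ht.trans (by linarith)
  have hintf : Integrable f μ := integrable_self_of_sq μ f hm h2
  have hie : Integrable (fun ω => Real.exp (t * f ω)) μ :=
    integrable_exp_mul μ f hm l t hl h2 h3 htl
  have hg : Integrable (fun ω =>
      1 + t * f ω + t ^ 2 / 2 * (f ω ^ 2 + l / 3 * (|f ω| ^ 3 * Real.exp (l * |f ω|)))) μ := by
    apply Integrable.add
    · exact (integrable_const 1).add (hintf.const_mul t)
    · exact (h2.add (h3.const_mul _)).const_mul _
  have hmono : mgf f μ t ≤ ∫ ω, (1 + t * f ω +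
      t ^ 2 / 2 * (f ω ^ 2 + l / 3 * (|f ω| ^ 3 * Real.exp (l * |f ω|)))) ∂μ := by
    apply integral_mono hie hg
    intro ω
    exact key_bound2 l t (f ω) hl ht
  set V := ∫ ω, f ω ^ 2 ∂μ with hV
  set T := ∫ ω, |f ω| ^ 3 * Real.exp (l * |f ω|) ∂μ with hT
  have hveq : (∫ ω, (1 + t * f ω +
      t ^ 2 / 2 * (f ω ^ 2 + l / 3 * (|f ω| ^ 3 * Real.exp (l * |f ω|)))) ∂μ)
      = 1 + t ^ 2 / 2 * (V + l / 3 * T) := by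
    have iA : Integrable (fun ω => 1 + t * f ω) μ :=
      (integrable_const 1).add (hintf.const_mul t)
    have iC : Integrable (fun ω => f ω ^ 2 + l / 3 * (|f ω| ^ 3 * Real.exp (l * |f ω|))) μ :=
      h2.add (h3.const_mul _)
    have iB : Integrable
        (fun ω => t ^ 2 / 2 * (f ω ^ 2 + l / 3 * (|f ω| ^ 3 * Real.exp (l * |f ω|)))) μ :=
      iC.const_mul _
    rw [integral_add iA iB, integral_add (integrable_const 1) (hintf.const_mul t),
      integral_const_mul, integral_const_mul, integral_add h2 (h3.const_mul _),
      integral_const_mul, hmean, integral_const]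
    simp [← hV, ← hT]
  have hT0 : 0 ≤ T := integral_nonneg fun ω => by positivity
  have hV0 : 0 ≤ V := integral_nonneg fun ω => sq_nonneg _
  have h13 : l / 3 * T ≤ V / 3 := by nlinarith
  have hle2 : 1 + t ^ 2 / 2 * (V + l / 3 * T) ≤ 1 + t ^ 2 * V := by nlinarith [sq_nonneg t]
  have := Real.add_one_le_exp (t ^ 2 * V)
  calc mgf f μ t ≤ 1 + t ^ 2 / 2 * (V + l / 3 * T) := by rw [← hveq]; exact hmono
    _ ≤ 1 + t ^ 2 * V := hle2
    _ ≤ Real.exp (t ^ 2 * V) := by linarith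

/-- Tail bound for the truncated normalized sum: under Sakhanenko's condition, with
`Sₙ = Σ ξᵢ`, `Bₙ² = Σ E ξᵢ²`, `Sₙ* = Sₙ 1(|Sₙ| ≤ Bₙ²)`, one has
`P((Sₙ*/Bₙ)² > x) ≤ 2 exp(-c₂ x)` for all `x ≥ 0`, where `c₂ = (1/2) min(λ/3, 1/2)`. -/
theorem stmt6 {Ω : Type*} [MeasurableSpace Ω] (μ : Measure Ω) [IsProbabilityMeasure μ]
    (n : ℕ) (ξ : Fin n → Ω → ℝ) (hmeas : ∀ i, Measurable (ξ i))
    (hindep : iIndepFun ξ μ)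
    (l : ℝ) (hl : 0 < l)
    (hmean : ∀ i, ∫ ω, ξ i ω ∂μ = 0)
    (hvar_int : ∀ i, Integrable (fun ω => (ξ i ω) ^ 2) μ)
    (hsak_int : ∀ i, Integrable (fun ω => |ξ i ω| ^ 3 * Real.exp (l * |ξ i ω|)) μ)
    (hsak : ∀ i, l * ∫ ω, |ξ i ω| ^ 3 * Real.exp (l * |ξ i ω|) ∂μ ≤ ∫ ω, (ξ i ω) ^ 2 ∂μ) :
    let S : Ω → ℝ := fun ω => ∑ i, ξ i ω
    let B2 : ℝ := ∑ i, ∫ ω, (ξ i ω) ^ 2 ∂μ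
    let B : ℝ := Real.sqrt B2
    let Sstar : Ω → ℝ := fun ω => if |S ω| ≤ B2 then S ω else 0
    let c₂ : ℝ := (1 / 2) * min (l / 3) (1 / 2)
    ∀ x : ℝ, 0 ≤ x →
      μ {ω | (Sstar ω / B) ^ 2 > x} ≤ ENNReal.ofReal (2 * Real.exp (-c₂ * x)) := by
  intro S B2 B Sstar c₂ x hx
  have hB2 : 0 ≤ B2 := Finset.sum_nonneg fun i _ => integral_nonneg fun ω => sq_nonneg _
  have hminpos : 0 < min (l / 3) (1 / 2) := lt_min (by linarith) (by norm_num)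
  have hc2a : 0 < c₂ := by
    have : c₂ = (1 / 2) * min (l / 3) (1 / 2) := rfl
    rw [this]; positivity
  have hc2b : c₂ ≤ 1 / 4 := by
    have h1 : c₂ = (1 / 2) * min (l / 3) (1 / 2) := rfl
    have h2 : min (l / 3) (1 / 2) ≤ 1 / 2 := min_le_right _ _
    rw [h1]; linarith
  have h2c : 2 * c₂ ≤ l / 3 := by
    have h1 : c₂ = (1 / 2) * min (l / 3) (1 / 2) := rfl
    have h2 : min (l / 3) (1 / 2) ≤ l / 3 := min_le_left _ _
    rw [h1]; linarith
  by_cases hxB : B2 ≤ x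
  · have hempty : {ω | (Sstar ω / B) ^ 2 > x} = ∅ := by
      ext ω
      simp only [Set.mem_setOf_eq, Set.mem_empty_iff_false, iff_false, not_lt, gt_iff_lt]
      by_cases hs : |S ω| ≤ B2
      · have hSs : Sstar ω = S ω := if_pos hs
        by_cases hB0 : B = 0
        · rw [hSs, hB0]
          simpa using hx
        · have hBpos : 0 < B := lt_of_le_of_ne (Real.sqrt_nonneg _) (Ne.symm hB0)
          have hB2B : B ^ 2 = B2 := Real.sq_sqrt hB2
          have hB2pos : 0 < B2 := by nlinarith
          rw [hSs, div_pow, hB2B]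
          have h1 : S ω ^ 2 ≤ B2 ^ 2 := by nlinarith [abs_nonneg (S ω), sq_abs (S ω)]
          calc S ω ^ 2 / B2 ≤ B2 ^ 2 / B2 := by gcongr
            _ = B2 := by
                rw [pow_two, mul_div_assoc, div_self hB2pos.ne', mul_one]
            _ ≤ x := hxB
      · have hSs : Sstar ω = 0 := if_neg hs
        rw [hSs]
        simpa using hx
    rw [hempty]
    simp
  · push_neg at hxB
    have hB2pos : 0 < B2 := lt_of_le_of_lt hx hxB
    have hBpos : 0 < B := Real.sqrt_pos.2 hB2pos
    have hB2B : B ^ 2 = B2 := Real.sq_sqrt hB2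
    have hss : Real.sqrt x * Real.sqrt x = x := Real.mul_self_sqrt hx
    set t : ℝ := 2 * c₂ * Real.sqrt x / B with hts
    have ht0 : 0 ≤ t := by positivity
    have hsx : Real.sqrt x ≤ B := Real.sqrt_le_sqrt hxB.le
    have htl : t ≤ l / 3 := by
      rw [hts, div_le_iff₀ hBpos]
      nlinarith [Real.sqrt_nonneg x]
    have htabs : |t| = t := abs_of_nonneg ht0
    set a : ℝ := Real.sqrt x * B with has
    -- inclusion of events
    have hsub : {ω | (Sstar ω / B) ^ 2 > x} ⊆ {ω | a ≤ S ω} ∪ {ω | S ω ≤ -a} := by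
      intro ω hω
      simp only [Set.mem_setOf_eq, gt_iff_lt] at hω
      by_cases hs : |S ω| ≤ B2
      · have hSs : Sstar ω = S ω := if_pos hs
        rw [hSs, div_pow, hB2B, lt_div_iff₀ hB2pos] at hω
        have ha2 : a ^ 2 = x * B2 := by
          rw [has, mul_pow, Real.sq_sqrt hx, hB2B]
        have haS : a ≤ |S ω| := by
          by_contra hcon
          push_neg at hcon
          have ha0 : 0 ≤ a := mul_nonneg (Real.sqrt_nonneg x) hBpos.le
          have : S ω ^ 2 ≤ a ^ 2 := by nlinarith [sq_abs (S ω), abs_nonneg (S ω)]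
          nlinarith
        rcases le_abs.1 haS with h | h
        · exact Or.inl (by simp only [Set.mem_setOf_eq]; exact h)
        · exact Or.inr (by simp only [Set.mem_setOf_eq]; linarith)
      · exfalso
        have hSs : Sstar ω = 0 := if_neg hs
        rw [hSs] at hω
        simp only [zero_div] at hω
        nlinarith
    -- integrability of exp(u * S)
    have hIntExp : ∀ u : ℝ, |u| ≤ l / 3 → Integrable (fun ω => Real.exp (u * S ω)) μ := by
      intro u hu
      have hul : |u| ≤ l := hu.trans (by linarith)
      have h := hindep.integrable_exp_mul_sum hmeas (s := Finset.univ)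
        (fun i _ => integrable_exp_mul μ (ξ i) (hmeas i) l u hl (hvar_int i) (hsak_int i) hul)
      have heq : (fun ω => Real.exp (u * (∑ i, ξ i) ω)) = fun ω => Real.exp (u * S ω) := by
        funext ω
        simp [S, Finset.sum_apply]
      rwa [heq] at h
    -- mgf bound
    have hmgfS : ∀ u : ℝ, |u| ≤ l / 3 → mgf S μ u ≤ Real.exp (u ^ 2 * B2) := by
      intro u hu
      have hSeq : mgf S μ u = ∏ i, mgf (ξ i) μ u := by
        have h := hindep.mgf_sum hmeas (t := u) Finset.univ
        rw [← h]
        congr 1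
        funext ω
        simp [S, Finset.sum_apply]
      rw [hSeq]
      calc ∏ i, mgf (ξ i) μ u ≤ ∏ i, Real.exp (u ^ 2 * ∫ ω, ξ i ω ^ 2 ∂μ) := by
            apply Finset.prod_le_prod (fun i _ => mgf_nonneg)
            intro i _
            exact mgf_le_exp_var μ (ξ i) (hmeas i) l u hl (hmean i) (hvar_int i)
              (hsak_int i) (hsak i) hu
        _ = Real.exp (u ^ 2 * B2) := by
            rw [← Real.exp_sum, ← Finset.mul_sum]
    have hExpBound : Real.exp (-(t * a) + t ^ 2 * B2) ≤ Real.exp (-c₂ * x) := by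
      apply Real.exp_le_exp.2
      have hta : t * a = 2 * c₂ * x := by
        have h1 : t * a = 2 * c₂ * (Real.sqrt x * Real.sqrt x) * (B / B) := by
          rw [hts, has]; ring
        rw [h1, hss, div_self hBpos.ne', mul_one]
      have ht2B : t ^ 2 * B2 = 4 * c₂ ^ 2 * x := by
        have hBB : B * B = B2 := by rw [← hB2B]; ring
        have h1 : t ^ 2 * B2 = 4 * c₂ ^ 2 * (Real.sqrt x * Real.sqrt x) * (B2 / (B * B)) := by
          rw [hts]; ring
        rw [h1, hss, hBB, div_self hB2pos.ne', mul_one]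
      rw [hta, ht2B]
      have hkey : 0 ≤ c₂ * (1 - 4 * c₂) * x :=
        mul_nonneg (mul_nonneg hc2a.le (sub_nonneg.2 (by linarith : 4 * c₂ ≤ 1))) hx
      have heq : -(2 * c₂ * x) + 4 * c₂ ^ 2 * x = -(c₂ * x) - c₂ * (1 - 4 * c₂) * x := by
        ring
      linarith
    have htt : |t| ≤ l / 3 := by rwa [htabs]
    have hnt : |(-t)| ≤ l / 3 := by rwa [abs_neg]
    have hup : (μ {ω | a ≤ S ω}).toReal ≤ Real.exp (-c₂ * x) := by
      have h1 := measure_ge_le_exp_mul_mgf (μ := μ) (X := S) a ht0 (hIntExp t htt)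
      have h2 := hmgfS t htt
      calc (μ {ω | a ≤ S ω}).toReal ≤ Real.exp (-t * a) * mgf S μ t := h1
        _ ≤ Real.exp (-t * a) * Real.exp (t ^ 2 * B2) :=
            mul_le_mul_of_nonneg_left h2 (Real.exp_pos _).le
        _ = Real.exp (-(t * a) + t ^ 2 * B2) := by rw [← Real.exp_add]; ring_nf
        _ ≤ Real.exp (-c₂ * x) := hExpBound
    have hlo : (μ {ω | S ω ≤ -a}).toReal ≤ Real.exp (-c₂ * x) := by
      have h1 := measure_le_le_exp_mul_mgf (μ := μ) (X := S) (-a) (neg_nonpos.2 ht0)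
        (hIntExp (-t) hnt)
      have h2 := hmgfS (-t) hnt
      calc (μ {ω | S ω ≤ -a}).toReal ≤ Real.exp (-(-t) * -a) * mgf S μ (-t) := h1
        _ ≤ Real.exp (-(-t) * -a) * Real.exp ((-t) ^ 2 * B2) :=
            mul_le_mul_of_nonneg_left h2 (Real.exp_pos _).le
        _ = Real.exp (-(t * a) + t ^ 2 * B2) := by rw [← Real.exp_add]; ring_nf
        _ ≤ Real.exp (-c₂ * x) := hExpBound
    calc μ {ω | (Sstar ω / B) ^ 2 > x} ≤ μ ({ω | a ≤ S ω} ∪ {ω | S ω ≤ -a}) :=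
          measure_mono hsub
      _ ≤ μ {ω | a ≤ S ω} + μ {ω | S ω ≤ -a} := measure_union_le _ _
      _ ≤ ENNReal.ofReal (Real.exp (-c₂ * x)) + ENNReal.ofReal (Real.exp (-c₂ * x)) := by
          apply add_le_add
          · rw [← ENNReal.ofReal_toReal (measure_ne_top μ _)]
            exact ENNReal.ofReal_le_ofReal hup
          · rw [← ENNReal.ofReal_toReal (measure_ne_top μ _)]
            exact ENNReal.ofReal_le_ofReal hlo
      _ = ENNReal.ofReal (2 * Real.exp (-c₂ * x)) := by
          rw [← ENNReal.ofReal_add (Real.exp_pos _).le (Real.exp_pos _).le]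
          congr 1
          ring
end

section
/- Let ξ₁,...,ξₙ be independent real random variables with E ξᵢ = 0 satisfying Sakhanenko's condition λ E[|ξᵢ|³ exp(λ|ξᵢ|)] ≤ E ξᵢ² for all i, and let ρ₁,...,ρₙ be real numbers with |ρᵢ| ≤ λ/3. Then E exp(Σᵢ ρᵢ ξᵢ) ≤ exp(Σᵢ ρᵢ² E ξᵢ²). -/
open MeasureTheory ProbabilityTheory Set

private lemma exp_taylor1 {x : ℝ} (hx : 0 ≤ x) : Real.exp x - 1 ≤ x * Real.exp x := by
  have hmono : MonotoneOn (fun x : ℝ => x * Real.exp x - Real.exp x + 1) (Ici 0) := by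
    have hd : ∀ y : ℝ, HasDerivAt (fun x : ℝ => x * Real.exp x - Real.exp x + 1)
        (y * Real.exp y) y := by
      intro y
      have := (((hasDerivAt_id y).mul (Real.hasDerivAt_exp y)).sub
        (Real.hasDerivAt_exp y)).add_const 1
      exact this.congr_deriv (by simp only [id]; ring)
    refine monotoneOn_of_deriv_nonneg (convex_Ici 0)
      (fun y _ => (hd y).continuousAt.continuousWithinAt)
      (fun y _ => ((hd y).differentiableAt).differentiableWithinAt) ?_
    intro y hy
    rw [(hd y).deriv]
    have : 0 < y := by simpa using hy
    positivity
  have := hmono (self_mem_Ici) hx hx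
  simp at this; linarith

private lemma exp_taylor2 {x : ℝ} (hx : 0 ≤ x) :
    Real.exp x - 1 - x ≤ x ^ 2 * Real.exp x / 2 := by
  have hmono : MonotoneOn (fun x : ℝ => x ^ 2 * Real.exp x / 2 - Real.exp x + 1 + x) (Ici 0) := by
    have hd : ∀ y : ℝ, HasDerivAt (fun x : ℝ => x ^ 2 * Real.exp x / 2 - Real.exp x + 1 + x)
        (y * Real.exp y + y ^ 2 * Real.exp y / 2 - Real.exp y + 1) y := by
      intro y
      have h1 : HasDerivAt (fun x : ℝ => x ^ 2) (2 * y) y := by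
        simpa using (hasDerivAt_pow 2 y)
      have := ((((h1.mul (Real.hasDerivAt_exp y)).div_const 2).sub
        (Real.hasDerivAt_exp y)).add_const 1).add (hasDerivAt_id y)
      exact this.congr_deriv (by ring)
    refine monotoneOn_of_deriv_nonneg (convex_Ici 0)
      (fun y _ => (hd y).continuousAt.continuousWithinAt)
      (fun y _ => ((hd y).differentiableAt).differentiableWithinAt) ?_
    intro y hy
    rw [(hd y).deriv]
    have hy' : (0:ℝ) ≤ y := le_of_lt (by simpa using hy)
    have h1 := exp_taylor1 hy'
    nlinarith [Real.exp_pos y, sq_nonneg y]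
  have := hmono (self_mem_Ici) hx hx
  simp at this; linarith

private lemma exp_taylor3 {x : ℝ} (hx : 0 ≤ x) :
    Real.exp x - 1 - x - x ^ 2 / 2 ≤ x ^ 3 * Real.exp x / 6 := by
  have hmono : MonotoneOn
      (fun x : ℝ => x ^ 3 * Real.exp x / 6 - Real.exp x + 1 + x + x ^ 2 / 2) (Ici 0) := by
    have hd : ∀ y : ℝ, HasDerivAt
        (fun x : ℝ => x ^ 3 * Real.exp x / 6 - Real.exp x + 1 + x + x ^ 2 / 2)
        (y ^ 2 * Real.exp y / 2 + y ^ 3 * Real.exp y / 6 - Real.exp y + 1 + y) y := by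
      intro y
      have h1 : HasDerivAt (fun x : ℝ => x ^ 3) (3 * y ^ 2) y := by
        simpa using (hasDerivAt_pow 3 y)
      have h2 : HasDerivAt (fun x : ℝ => x ^ 2) (2 * y) y := by
        simpa using (hasDerivAt_pow 2 y)
      have := (((((h1.mul (Real.hasDerivAt_exp y)).div_const 6).sub
        (Real.hasDerivAt_exp y)).add_const 1).add (hasDerivAt_id y)).add (h2.div_const 2)
      exact this.congr_deriv (by ring)
    refine monotoneOn_of_deriv_nonneg (convex_Ici 0)
      (fun y _ => (hd y).continuousAt.continuousWithinAt)
      (fun y _ => ((hd y).differentiableAt).differentiableWithinAt) ?_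
    intro y hy
    rw [(hd y).deriv]
    have hy' : (0:ℝ) ≤ y := le_of_lt (by simpa using hy)
    have h2 := exp_taylor2 hy'
    nlinarith [Real.exp_pos y, pow_nonneg hy' 3]
  have := hmono (self_mem_Ici) hx hx
  simp at this; linarith

private lemma exp_taylor_neg {x : ℝ} (hx : x ≤ 0) : Real.exp x ≤ 1 + x + x ^ 2 / 2 := by
  have hmono : AntitoneOn (fun x : ℝ => 1 + x + x ^ 2 / 2 - Real.exp x) (Iic 0) := by
    have hd : ∀ y : ℝ, HasDerivAt (fun x : ℝ => 1 + x + x ^ 2 / 2 - Real.exp x)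
        (1 + y - Real.exp y) y := by
      intro y
      have h2 : HasDerivAt (fun x : ℝ => x ^ 2) (2 * y) y := by
        simpa using (hasDerivAt_pow 2 y)
      have := (((hasDerivAt_id y).const_add 1).add (h2.div_const 2)).sub (Real.hasDerivAt_exp y)
      exact this.congr_deriv (by ring)
    refine antitoneOn_of_deriv_nonpos (convex_Iic 0)
      (fun y _ => (hd y).continuousAt.continuousWithinAt)
      (fun y _ => ((hd y).differentiableAt).differentiableWithinAt) ?_
    intro y _
    rw [(hd y).deriv]
    linarith [Real.add_one_le_exp y]
  have := hmono hx (self_mem_Iic) hx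
  simp at this; linarith

private lemma exp_taylor_abs (x : ℝ) :
    Real.exp x ≤ 1 + x + x ^ 2 / 2 + |x| ^ 3 * Real.exp |x| / 6 := by
  rcases le_or_gt 0 x with h | h
  · have := exp_taylor3 h
    rw [abs_of_nonneg h]
    linarith
  · have := exp_taylor_neg h.le
    have h6 : 0 ≤ |x| ^ 3 * Real.exp |x| / 6 := by positivity
    linarith

section Single
variable {Ω : Type*} [MeasurableSpace Ω] (μ : Measure Ω) [IsProbabilityMeasure μ]

private lemma sq_abs_int {X : Ω → ℝ} (hm : Measurable X)
    (hvar : Integrable (fun ω => (X ω) ^ 2) μ) : Integrable X μ := by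
  refine Integrable.mono' (g := fun ω => 1 + (X ω) ^ 2)
    ((integrable_const 1).add hvar) hm.aestronglyMeasurable ?_
  filter_upwards with ω
  rw [Real.norm_eq_abs]
  nlinarith [sq_nonneg (|X ω| - 1), abs_nonneg (X ω), sq_abs (X ω)]

private lemma exp_int {X : Ω → ℝ} (hm : Measurable X) {l t : ℝ} (hl : 0 < l)
    (hsak_int : Integrable (fun ω => |X ω| ^ 3 * Real.exp (l * |X ω|)) μ)
    (ht : |t| ≤ l) :
    Integrable (fun ω => Real.exp (t * X ω)) μ := by
  refine Integrable.mono'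
    (g := fun ω => Real.exp l + |X ω| ^ 3 * Real.exp (l * |X ω|))
    ((integrable_const _).add hsak_int) ((hm.const_mul t).exp.aestronglyMeasurable) ?_
  filter_upwards with ω
  rw [Real.norm_eq_abs, abs_of_pos (Real.exp_pos _)]
  have h1 : t * X ω ≤ l * |X ω| := by
    calc t * X ω ≤ |t * X ω| := le_abs_self _
    _ = |t| * |X ω| := abs_mul _ _
    _ ≤ l * |X ω| := mul_le_mul_of_nonneg_right ht (abs_nonneg _)
  have h2 : Real.exp (t * X ω) ≤ Real.exp (l * |X ω|) := Real.exp_le_exp.2 h1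
  rcases le_or_gt (|X ω|) 1 with h | h
  · have h3 : Real.exp (l * |X ω|) ≤ Real.exp l := by
      apply Real.exp_le_exp.2; nlinarith [abs_nonneg (X ω)]
    have h4 : (0:ℝ) ≤ |X ω| ^ 3 * Real.exp (l * |X ω|) := by positivity
    linarith
  · have h3 : (1:ℝ) ≤ |X ω| ^ 3 := by
      have := pow_le_pow_left₀ (by norm_num : (0:ℝ) ≤ 1) h.le 3
      simpa using this
    have h4 : Real.exp (l * |X ω|) ≤ |X ω| ^ 3 * Real.exp (l * |X ω|) :=
      le_mul_of_one_le_left (Real.exp_pos _).le h3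
    linarith [Real.exp_pos l]

private lemma mgf_single {X : Ω → ℝ} (hm : Measurable X) {l t : ℝ} (hl : 0 < l)
    (hmean : ∫ ω, X ω ∂μ = 0)
    (hvar : Integrable (fun ω => (X ω) ^ 2) μ)
    (hsak_int : Integrable (fun ω => |X ω| ^ 3 * Real.exp (l * |X ω|)) μ)
    (hsak : l * ∫ ω, |X ω| ^ 3 * Real.exp (l * |X ω|) ∂μ ≤ ∫ ω, (X ω) ^ 2 ∂μ)
    (ht : |t| ≤ l / 3) :
    ∫ ω, Real.exp (t * X ω) ∂μ ≤ Real.exp (t ^ 2 * ∫ ω, (X ω) ^ 2 ∂μ) := by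
  have htl : |t| ≤ l := ht.trans (by linarith)
  have hσ : 0 ≤ ∫ ω, (X ω) ^ 2 ∂μ := integral_nonneg fun ω => sq_nonneg _
  have hI : 0 ≤ ∫ ω, |X ω| ^ 3 * Real.exp (l * |X ω|) ∂μ :=
    integral_nonneg fun ω => by positivity
  have hXi := sq_abs_int μ hm hvar
  have hA : Integrable (fun ω => t * X ω) μ := hXi.const_mul t
  have hB : Integrable (fun ω => (t ^ 2 / 2) * (X ω) ^ 2) μ := hvar.const_mul _
  have hC : Integrable
      (fun ω => (|t| ^ 3 / 6) * (|X ω| ^ 3 * Real.exp (l * |X ω|))) μ :=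
    hsak_int.const_mul _
  have hpt : ∀ ω, Real.exp (t * X ω) ≤
      1 + t * X ω + (t ^ 2 / 2) * (X ω) ^ 2
        + (|t| ^ 3 / 6) * (|X ω| ^ 3 * Real.exp (l * |X ω|)) := by
    intro ω
    refine (exp_taylor_abs (t * X ω)).trans ?_
    have e2 : |t * X ω| = |t| * |X ω| := abs_mul _ _
    have e3 : |t * X ω| ^ 3 = |t| ^ 3 * |X ω| ^ 3 := by rw [e2, mul_pow]
    have e4 : Real.exp |t * X ω| ≤ Real.exp (l * |X ω|) := by
      apply Real.exp_le_exp.2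
      rw [e2]; exact mul_le_mul_of_nonneg_right htl (abs_nonneg _)
    have h8 : |t * X ω| ^ 3 * Real.exp |t * X ω| ≤
        |t| ^ 3 * |X ω| ^ 3 * Real.exp (l * |X ω|) := by
      rw [e3]; exact mul_le_mul_of_nonneg_left e4 (by positivity)
    have e5 : (t * X ω) ^ 2 = t ^ 2 * (X ω) ^ 2 := mul_pow _ _ 2
    nlinarith
  have hg : ∫ ω, (1 + t * X ω + (t ^ 2 / 2) * (X ω) ^ 2
      + (|t| ^ 3 / 6) * (|X ω| ^ 3 * Real.exp (l * |X ω|))) ∂μ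
      = 1 + (t ^ 2 / 2) * (∫ ω, (X ω) ^ 2 ∂μ)
        + (|t| ^ 3 / 6) * (∫ ω, |X ω| ^ 3 * Real.exp (l * |X ω|) ∂μ) := by
    have hD1 : Integrable (fun ω => 1 + t * X ω) μ := (integrable_const 1).add hA
    have hD2 : Integrable (fun ω => 1 + t * X ω + (t ^ 2 / 2) * (X ω) ^ 2) μ := hD1.add hB
    rw [integral_add hD2 hC, integral_add hD1 hB,
        integral_add (integrable_const 1) hA,
        integral_const_mul, integral_const_mul, integral_const_mul, integral_const, hmean]
    simp
  have hD3 : Integrable (fun ω => 1 + t * X ω + (t ^ 2 / 2) * (X ω) ^ 2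
      + (|t| ^ 3 / 6) * (|X ω| ^ 3 * Real.exp (l * |X ω|))) μ :=
    ((((integrable_const 1).add hA).add hB).add hC)
  have hmono := integral_mono (exp_int μ hm hl hsak_int htl) hD3 hpt
  rw [hg] at hmono
  refine hmono.trans ?_
  have h5 : |t| ^ 3 ≤ (l / 3) * t ^ 2 := by nlinarith [abs_nonneg t, sq_abs t]
  have h6 : |t| ^ 3 * (∫ ω, |X ω| ^ 3 * Real.exp (l * |X ω|) ∂μ) ≤
      (t ^ 2 / 3) * (l * ∫ ω, |X ω| ^ 3 * Real.exp (l * |X ω|) ∂μ) := by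
    rw [show (t ^ 2 / 3) * (l * ∫ ω, |X ω| ^ 3 * Real.exp (l * |X ω|) ∂μ)
      = ((l / 3) * t ^ 2) * ∫ ω, |X ω| ^ 3 * Real.exp (l * |X ω|) ∂μ by ring]
    exact mul_le_mul_of_nonneg_right h5 hI
  have h7 : (t ^ 2 / 3) * (l * ∫ ω, |X ω| ^ 3 * Real.exp (l * |X ω|) ∂μ) ≤
      (t ^ 2 / 3) * ∫ ω, (X ω) ^ 2 ∂μ :=
    mul_le_mul_of_nonneg_left hsak (by positivity)
  have h9 := Real.add_one_le_exp (t ^ 2 * ∫ ω, (X ω) ^ 2 ∂μ)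
  nlinarith [sq_nonneg t]

end Single

/-- Sub-Gaussian bound for weighted sums: for independent centered `ξᵢ` satisfying
Sakhanenko's condition and weights `|ρᵢ| ≤ λ/3`,
`E exp(Σ ρᵢ ξᵢ) ≤ exp(Σ ρᵢ² E ξᵢ²)`. -/
theorem stmt12 {Ω : Type*} [MeasurableSpace Ω] (μ : Measure Ω) [IsProbabilityMeasure μ]
    (n : ℕ) (ξ : Fin n → Ω → ℝ) (hmeas : ∀ i, Measurable (ξ i))
    (hindep : iIndepFun ξ μ)
    (l : ℝ) (hl : 0 < l)
    (hmean : ∀ i, ∫ ω, ξ i ω ∂μ = 0)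
    (hvar_int : ∀ i, Integrable (fun ω => (ξ i ω) ^ 2) μ)
    (hsak_int : ∀ i, Integrable (fun ω => |ξ i ω| ^ 3 * Real.exp (l * |ξ i ω|)) μ)
    (hsak : ∀ i, l * ∫ ω, |ξ i ω| ^ 3 * Real.exp (l * |ξ i ω|) ∂μ ≤ ∫ ω, (ξ i ω) ^ 2 ∂μ)
    (ρ : Fin n → ℝ) (hρ : ∀ i, |ρ i| ≤ l / 3) :
    ∫ ω, Real.exp (∑ i, ρ i * ξ i ω) ∂μ ≤
      Real.exp (∑ i, (ρ i) ^ 2 * ∫ ω, (ξ i ω) ^ 2 ∂μ) := by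
  set X : Fin n → Ω → ℝ := fun i ω => ρ i * ξ i ω with hX
  have hindep' : iIndepFun X μ :=
    hindep.comp (fun i x => ρ i * x) (fun i => measurable_const_mul _)
  have hmeas' : ∀ i, Measurable (X i) := fun i => (hmeas i).const_mul _
  have hmgf := hindep'.mgf_sum (t := 1) hmeas' Finset.univ
  calc ∫ ω, Real.exp (∑ i, ρ i * ξ i ω) ∂μ
      = mgf (∑ i, X i) μ 1 := by
        unfold mgf
        congr 1
        funext ω
        simp [hX, Finset.sum_apply]
    _ = ∏ i, mgf (X i) μ 1 := hmgf
    _ ≤ ∏ i, Real.exp ((ρ i) ^ 2 * ∫ ω, (ξ i ω) ^ 2 ∂μ) := by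
        refine Finset.prod_le_prod (fun i _ => mgf_nonneg) (fun i _ => ?_)
        have := mgf_single μ (hmeas i) hl (hmean i) (hvar_int i) (hsak_int i)
          (hsak i) (hρ i)
        simpa [mgf, hX] using this
    _ = Real.exp (∑ i, (ρ i) ^ 2 * ∫ ω, (ξ i ω) ^ 2 ∂μ) := (Real.exp_sum _ _).symm
end
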